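/- arXiv:2010.05431 — 5 statements merged into one kernel-verified Lean document; each statement's English description precedes it below -/
import Mathlib

section
/- Fix s > 1, an integer N ≥ 1, indices 0 ≤ i_L < i_R ≤ N with i_L + 1 < i_R, and fixed reals x_0 < x_1 < ⋯ < x_{i_L} and x_{i_R} < x_{i_R+1} < ⋯ < x_N with x_{i_L} < x_{i_R}. Then the function ℰ(X) := Σ_{0 ≤ i < j ≤ N} (x_j − x_i)^{−s}, viewed as a function of X = (x_{i_L+1},…,x_{i_R−1}) on the open set S := { X : x_{i_L} < x_{i_L+1} < ⋯ < x_{i_R−1} < x_{i_R} }, has a unique global minimizer X* in S, and X* is the unique point of S at which P_{i_L}(X) = P_{i_L+1}(X) = ⋯ = P_{i_R−1}(X). -/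
open scoped BigOperators

/-- The total repulsion of the cut at `x_k, x_{k+1}`:
`P_k = Σ_{0 ≤ i ≤ k < j ≤ N} (x_j - x_i)^{-s-1}`. -/
noncomputable def repP (s : ℝ) (N : ℕ) (x : ℕ → ℝ) (k : ℕ) : ℝ :=
  ∑ i ∈ Finset.range (k + 1), ∑ j ∈ Finset.Icc (k + 1) N, (x j - x i) ^ (-s - 1)

/-- The energy `ℰ(X) = Σ_{0 ≤ i < j ≤ N} (x_j - x_i)^{-s}`. -/
noncomputable def calE (s : ℝ) (N : ℕ) (x : ℕ → ℝ) : ℝ :=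
  ∑ i ∈ Finset.range (N + 1), ∑ j ∈ Finset.Icc (i + 1) N, (x j - x i) ^ (-s)

/-- The admissible configurations: `y` agrees with the fixed configuration `x`
at indices `i ≤ i_L` and `i ≥ i_R`, and `y_0 < y_1 < ⋯ < y_N`. -/
def admis (N iL iR : ℕ) (x : ℕ → ℝ) (y : ℕ → ℝ) : Prop :=
  (∀ i, i ≤ iL → y i = x i) ∧ (∀ i, iR ≤ i → y i = x i) ∧ (∀ i, i < N → y i < y (i + 1))

open Finset

section Aux

lemma strictConvexOn_rpow_neg {c : ℝ} (hc : c < 0) :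
    StrictConvexOn ℝ (Set.Ioi (0:ℝ)) (fun x : ℝ => x ^ c) := by
  apply StrictMonoOn.strictConvexOn_of_deriv (convex_Ioi 0)
  · intro x hx
    exact (Real.continuousAt_rpow_const x c (Or.inl (ne_of_gt hx))).continuousWithinAt
  · rw [interior_Ioi]
    intro a ha b hb hab
    rw [Real.deriv_rpow_const a c,
      Real.deriv_rpow_const b c]
    have h1 : b ^ (c-1) < a ^ (c-1) := Real.rpow_lt_rpow_of_neg ha hab (by linarith)
    exact mul_lt_mul_of_neg_left h1 hc

lemma chain_lt {N : ℕ} {y : ℕ → ℝ} (h : ∀ i, i < N → y i < y (i+1)) :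
    ∀ i j, i < j → j ≤ N → y i < y j := by
  intro i j
  induction j with
  | zero => omega
  | succ j ih =>
    intro h1 h2
    rcases Nat.lt_succ_iff_lt_or_eq.mp h1 with h' | h'
    · exact (ih h' (by omega)).trans (h j (by omega))
    · subst h'; exact h i (by omega)

lemma gap_pos {N : ℕ} {y : ℕ → ℝ} (h : ∀ i, i < N → y i < y (i+1))
    {i j : ℕ} (hij : i < j) (hjN : j ≤ N) : 0 < y j - y i :=
  sub_pos.mpr (chain_lt h i j hij hjN)

lemma sum_pairs (N : ℕ) (w : ℕ → ℕ → ℝ) (d : ℕ → ℝ) :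
    ∑ i ∈ range (N+1), ∑ j ∈ Icc (i+1) N, (d j - d i) * w i j
      = ∑ m ∈ range (N+1), d m * ((∑ i ∈ range m, w i m) - ∑ j ∈ Icc (m+1) N, w m j) := by
  have hswap : ∀ f : ℕ → ℕ → ℝ, (∑ i ∈ range (N+1), ∑ j ∈ Icc (i+1) N, f i j)
      = ∑ j ∈ range (N+1), ∑ i ∈ range j, f i j := by
    intro f
    apply Finset.sum_comm'
    intro i j
    simp only [Finset.mem_range, Finset.mem_Icc]
    omega
  have h1 : (∑ i ∈ range (N+1), ∑ j ∈ Icc (i+1) N, d j * w i j)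
      = ∑ m ∈ range (N+1), d m * ∑ i ∈ range m, w i m := by
    rw [hswap (fun i j => d j * w i j)]
    exact Finset.sum_congr rfl fun m _ => (Finset.mul_sum _ _ _).symm
  have h2 : (∑ i ∈ range (N+1), ∑ j ∈ Icc (i+1) N, d i * w i j)
      = ∑ m ∈ range (N+1), d m * ∑ j ∈ Icc (m+1) N, w m j :=
    Finset.sum_congr rfl fun m _ => (Finset.mul_sum _ _ _).symm
  calc (∑ i ∈ range (N+1), ∑ j ∈ Icc (i+1) N, (d j - d i) * w i j)
      = (∑ i ∈ range (N+1), ∑ j ∈ Icc (i+1) N, d j * w i j)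
        - ∑ i ∈ range (N+1), ∑ j ∈ Icc (i+1) N, d i * w i j := by
        rw [← Finset.sum_sub_distrib]
        refine Finset.sum_congr rfl fun i _ => ?_
        rw [← Finset.sum_sub_distrib]
        exact Finset.sum_congr rfl fun j _ => by ring
    _ = ∑ m ∈ range (N+1), d m * ((∑ i ∈ range m, w i m) - ∑ j ∈ Icc (m+1) N, w m j) := by
        rw [h1, h2, ← Finset.sum_sub_distrib]
        exact Finset.sum_congr rfl fun m _ => (mul_sub _ _ _).symm

lemma repP_sub (s : ℝ) (N : ℕ) (y : ℕ → ℝ) {m : ℕ} (hm1 : 1 ≤ m) (hmN : m ≤ N) :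
    repP s N y (m-1) - repP s N y m
      = (∑ i ∈ range m, (y m - y i) ^ (-s-1)) - ∑ j ∈ Icc (m+1) N, (y j - y m) ^ (-s-1) := by
  obtain ⟨k, rfl⟩ : ∃ k, m = k + 1 := ⟨m-1, by omega⟩
  have hIcc : Icc (k+1) N = insert (k+1) (Icc (k+1+1) N) := by
    exact (Finset.insert_Icc_add_one_left_eq_Icc hmN).symm
  have hrange : range (k+1+1) = insert (k+1) (range (k+1)) := Finset.range_add_one
  simp only [repP, Nat.add_sub_cancel]
  rw [hIcc, hrange, Finset.sum_insert (by simp)]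
  have h2 : ∀ i ∈ range (k+1),
      (∑ j ∈ insert (k+1) (Icc (k+1+1) N), (y j - y i) ^ (-s-1))
        = (y (k+1) - y i) ^ (-s-1) + ∑ j ∈ Icc (k+1+1) N, (y j - y i) ^ (-s-1) := by
    intro i _
    rw [Finset.sum_insert (by simp)]
  rw [Finset.sum_congr rfl h2, Finset.sum_add_distrib]
  ring

lemma hasDerivAt_calE (s : ℝ) {N : ℕ} {y : ℕ → ℝ} (d : ℕ → ℝ)
    (hpos : ∀ i j, i < j → j ≤ N → 0 < y j - y i) :
    HasDerivAt (fun t => calE s N (fun i => y i + t * d i))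
      (∑ i ∈ range (N+1), ∑ j ∈ Icc (i+1) N, (d j - d i) * (-s * (y j - y i) ^ (-s-1))) 0 := by
  unfold calE
  apply HasDerivAt.fun_sum
  intro i _
  apply HasDerivAt.fun_sum
  intro j hj
  rw [Finset.mem_Icc] at hj
  have hb : 0 < y j - y i := hpos i j (by omega) hj.2
  have h1 : HasDerivAt (fun t : ℝ => (y j + t * d j) - (y i + t * d i)) (d j - d i) 0 := by
    have := (((hasDerivAt_id (0:ℝ)).mul_const (d j)).const_add (y j)).fun_sub
      (((hasDerivAt_id (0:ℝ)).mul_const (d i)).const_add (y i))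
    simpa using this
  have h2 : HasDerivAt (fun u : ℝ => u ^ (-s)) (-s * (y j - y i) ^ (-s-1))
      ((y j + 0 * d j) - (y i + 0 * d i)) := by
    have he : (y j + 0 * d j) - (y i + 0 * d i) = y j - y i := by ring
    rw [he]
    have := Real.hasDerivAt_rpow_const (x := y j - y i) (p := -s) (Or.inl hb.ne')
    simpa [sub_eq_add_neg] using this
  have h3 := h2.comp 0 h1
  simpa [Function.comp_def, mul_comm] using h3

lemma term_le_calE {s : ℝ} {N : ℕ} {y : ℕ → ℝ}
    (hpos : ∀ i j, i < j → j ≤ N → 0 < y j - y i)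
    {i0 j0 : ℕ} (hij : i0 < j0) (hj : j0 ≤ N) :
    (y j0 - y i0) ^ (-s) ≤ calE s N y := by
  unfold calE
  have hterm : ∀ i ∈ range (N+1), (0:ℝ) ≤ ∑ j ∈ Icc (i+1) N, (y j - y i) ^ (-s) := by
    intro i _
    apply Finset.sum_nonneg
    intro j hj'
    rw [Finset.mem_Icc] at hj'
    exact Real.rpow_nonneg (hpos i j (by omega) hj'.2).le _
  have h1 : (∑ j ∈ Icc (i0+1) N, (y j - y i0) ^ (-s))
      ≤ ∑ i ∈ range (N+1), ∑ j ∈ Icc (i+1) N, (y j - y i) ^ (-s) :=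
    Finset.single_le_sum hterm (by simp; omega)
  refine le_trans ?_ h1
  apply Finset.single_le_sum (f := fun j => (y j - y i0) ^ (-s))
  · intro j hj'
    rw [Finset.mem_Icc] at hj'
    exact Real.rpow_nonneg (hpos i0 j (by omega) hj'.2).le _
  · rw [Finset.mem_Icc]; omega

lemma calE_pos {s : ℝ} {N : ℕ} (hN : 1 ≤ N) {y : ℕ → ℝ}
    (hpos : ∀ i j, i < j → j ≤ N → 0 < y j - y i) : 0 < calE s N y :=
  lt_of_lt_of_le (Real.rpow_pos_of_pos (hpos 0 1 one_pos hN) _)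
    (term_le_calE hpos one_pos hN)

lemma combo_apply {a b : ℕ → ℝ} {t u : ℝ} (i : ℕ) : (t • a + u • b) i = t * a i + u * b i := by
  simp [Pi.add_apply, Pi.smul_apply, smul_eq_mul]

lemma calE_convex {s : ℝ} (hs : 0 < s) {N : ℕ} {a b : ℕ → ℝ}
    (ha : ∀ i, i < N → a i < a (i+1)) (hb : ∀ i, i < N → b i < b (i+1))
    {t u : ℝ} (ht : 0 ≤ t) (hu : 0 ≤ u) (htu : t + u = 1) :
    calE s N (t • a + u • b) ≤ t * calE s N a + u * calE s N b := by
  have hconv := (strictConvexOn_rpow_neg (neg_lt_zero.mpr hs)).convexOn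
  unfold calE
  have hle : ∀ i ∈ range (N+1), ∀ j ∈ Icc (i+1) N,
      ((t • a + u • b) j - (t • a + u • b) i) ^ (-s)
        ≤ t * (a j - a i) ^ (-s) + u * (b j - b i) ^ (-s) := by
    intro i _ j hj
    rw [Finset.mem_Icc] at hj
    have hga : 0 < a j - a i := gap_pos ha (by omega) hj.2
    have hgb : 0 < b j - b i := gap_pos hb (by omega) hj.2
    have h := hconv.2 (Set.mem_Ioi.mpr hga) (Set.mem_Ioi.mpr hgb) ht hu htu
    have hbase : (t • a + u • b) j - (t • a + u • b) i
        = t • (a j - a i) + u • (b j - b i) := by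
      rw [combo_apply, combo_apply]; simp [smul_eq_mul]; ring
    rw [hbase]
    simpa [smul_eq_mul] using h
  calc (∑ i ∈ range (N+1), ∑ j ∈ Icc (i+1) N, ((t • a + u • b) j - (t • a + u • b) i) ^ (-s))
      ≤ ∑ i ∈ range (N+1), ∑ j ∈ Icc (i+1) N,
          (t * (a j - a i) ^ (-s) + u * (b j - b i) ^ (-s)) :=
        Finset.sum_le_sum fun i hi => Finset.sum_le_sum fun j hj => hle i hi j hj
    _ = t * (∑ i ∈ range (N+1), ∑ j ∈ Icc (i+1) N, (a j - a i) ^ (-s))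
        + u * ∑ i ∈ range (N+1), ∑ j ∈ Icc (i+1) N, (b j - b i) ^ (-s) := by
        rw [Finset.mul_sum, Finset.mul_sum, ← Finset.sum_add_distrib]
        refine Finset.sum_congr rfl fun i _ => ?_
        rw [Finset.mul_sum, Finset.mul_sum, ← Finset.sum_add_distrib]

lemma calE_strict_mid {s : ℝ} (hs : 0 < s) {N iL iR : ℕ} {x a b : ℕ → ℝ}
    (hRN : iR ≤ N)
    (haA : admis N iL iR x a) (hbA : admis N iL iR x b) (hne : a ≠ b) :
    calE s N ((2:ℝ)⁻¹ • a + (2:ℝ)⁻¹ • b)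
      < 2⁻¹ * calE s N a + 2⁻¹ * calE s N b := by
  have hconv := strictConvexOn_rpow_neg (neg_lt_zero.mpr hs)
  have hex : ∃ i, a i ≠ b i := by
    by_contra h
    push_neg at h
    exact hne (funext h)
  set m := Nat.find hex with hm
  have hmne : a m ≠ b m := Nat.find_spec hex
  have hmin : ∀ k, k < m → a k = b k := fun k hk => by
    have := Nat.find_min hex hk; simpa using this
  have hmL : iL < m := by
    by_contra h
    push_neg at h
    exact hmne ((haA.1 m h).trans (hbA.1 m h).symm)
  have hmR : m < iR := by
    by_contra h
    push_neg at h
    exact hmne ((haA.2.1 m h).trans (hbA.2.1 m h).symm)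
  have hm1 : 1 ≤ m := by omega
  have hmN : m ≤ N := by omega
  have hprev : a (m-1) = b (m-1) := hmin _ (by omega)
  have hsig : ∀ y : ℕ → ℝ, calE s N y
      = ∑ p ∈ (range (N+1)).sigma (fun i => Icc (i+1) N), (y p.2 - y p.1) ^ (-s) := by
    intro y
    rw [Finset.sum_sigma]
    rfl
  rw [hsig, hsig, hsig, Finset.mul_sum, Finset.mul_sum, ← Finset.sum_add_distrib]
  apply Finset.sum_lt_sum
  · rintro ⟨i, j⟩ hp
    simp only [Finset.mem_sigma, Finset.mem_range, Finset.mem_Icc] at hp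
    have hga : 0 < a j - a i := gap_pos haA.2.2 (by omega) hp.2.2
    have hgb : 0 < b j - b i := gap_pos hbA.2.2 (by omega) hp.2.2
    have h := hconv.convexOn.2 (Set.mem_Ioi.mpr hga) (Set.mem_Ioi.mpr hgb)
      (by norm_num : (0:ℝ) ≤ 2⁻¹) (by norm_num : (0:ℝ) ≤ 2⁻¹) (by norm_num)
    have hbase : ((2:ℝ)⁻¹ • a + (2:ℝ)⁻¹ • b) j - ((2:ℝ)⁻¹ • a + (2:ℝ)⁻¹ • b) i
        = (2:ℝ)⁻¹ • (a j - a i) + (2:ℝ)⁻¹ • (b j - b i) := by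
      rw [combo_apply, combo_apply]; simp [smul_eq_mul]; ring
    rw [hbase]
    simpa [smul_eq_mul] using h
  · refine ⟨⟨m-1, m⟩, ?_, ?_⟩
    · simp only [Finset.mem_sigma, Finset.mem_range, Finset.mem_Icc]
      omega
    · have hga : 0 < a m - a (m-1) := gap_pos haA.2.2 (by omega) hmN
      have hgb : 0 < b m - b (m-1) := gap_pos hbA.2.2 (by omega) hmN
      have hne' : a m - a (m-1) ≠ b m - b (m-1) := by
        rw [hprev]
        intro h
        exact hmne (by linarith [sub_left_inj.mp h])
      have h := hconv.2 (Set.mem_Ioi.mpr hga) (Set.mem_Ioi.mpr hgb) hne'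
        (by norm_num : (0:ℝ) < 2⁻¹) (by norm_num : (0:ℝ) < 2⁻¹) (by norm_num)
      have hbase : ((2:ℝ)⁻¹ • a + (2:ℝ)⁻¹ • b) m - ((2:ℝ)⁻¹ • a + (2:ℝ)⁻¹ • b) (m-1)
          = (2:ℝ)⁻¹ • (a m - a (m-1)) + (2:ℝ)⁻¹ • (b m - b (m-1)) := by
        rw [combo_apply, combo_apply]; simp [smul_eq_mul]; ring
      show (((2:ℝ)⁻¹ • a + (2:ℝ)⁻¹ • b) m - ((2:ℝ)⁻¹ • a + (2:ℝ)⁻¹ • b) (m-1)) ^ (-s)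
        < 2⁻¹ * (a m - a (m-1)) ^ (-s) + 2⁻¹ * (b m - b (m-1)) ^ (-s)
      rw [hbase]
      simpa [smul_eq_mul] using h

lemma admis_mid {N iL iR : ℕ} {x a b : ℕ → ℝ}
    (haA : admis N iL iR x a) (hbA : admis N iL iR x b) :
    admis N iL iR x ((2:ℝ)⁻¹ • a + (2:ℝ)⁻¹ • b) := by
  refine ⟨fun i hi => ?_, fun i hi => ?_, fun i hi => ?_⟩
  · rw [combo_apply, haA.1 i hi, hbA.1 i hi]; ring
  · rw [combo_apply, haA.2.1 i hi, hbA.2.1 i hi]; ring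
  · rw [combo_apply, combo_apply]
    have h1 := haA.2.2 i hi
    have h2 := hbA.2.2 i hi
    nlinarith

lemma exists_admis {N iL iR : ℕ} (hLR : iL < iR) (hLR2 : iL + 1 < iR) (hRN : iR ≤ N)
    {x : ℕ → ℝ}
    (hxl : ∀ i, i < iL → x i < x (i + 1))
    (hxr : ∀ i, iR ≤ i → i < N → x i < x (i + 1))
    (hmid : x iL < x iR) :
    ∃ y0 : ℕ → ℝ, admis N iL iR x y0 := by
  have hcast : (iL : ℝ) < iR := by exact_mod_cast hLR
  set c : ℝ := (x iR - x iL) / ((iR : ℝ) - iL) with hc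
  have hcpos : 0 < c := div_pos (by linarith) (by linarith)
  set y0 : ℕ → ℝ := fun i =>
    if i ≤ iL then x i else if iR ≤ i then x i
    else x iL + ((i : ℝ) - iL) * c with hy0
  refine ⟨y0, fun i hi => by simp [hy0, hi], fun i hi => by
    have h1 : ¬ i ≤ iL := by omega
    simp [hy0, h1, hi], ?_⟩
  intro i hiN
  rcases lt_or_ge i iL with h | h
  · -- i + 1 ≤ iL
    have h1 : i ≤ iL := by omega
    have h2 : i + 1 ≤ iL := by omega
    simpa [hy0, h1, h2] using hxl i h
  rcases eq_or_lt_of_le h with h' | h'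
  · -- i = iL
    have h1 : i ≤ iL := le_of_eq h'.symm
    have h2 : ¬ i + 1 ≤ iL := by omega
    have h3 : ¬ iR ≤ i + 1 := by omega
    simp only [hy0, h1, if_pos, h2, if_neg, h3, if_false, if_true]
    rw [← h']
    have : (0:ℝ) < ((i:ℝ) + 1 - i) * c := by
      have : ((i:ℝ) + 1 - i) = 1 := by ring
      rw [this]; linarith
    push_cast
    linarith
  -- iL < i
  have h1 : ¬ i ≤ iL := by omega
  rcases lt_or_ge (i+1) iR with h2 | h2
  · -- both interior
    have h3 : ¬ iR ≤ i := by omega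
    have h4 : ¬ i + 1 ≤ iL := by omega
    have h5 : ¬ iR ≤ i + 1 := by omega
    simp only [hy0, h1, if_neg, h3, if_false, h4, h5]
    push_cast
    nlinarith
  rcases eq_or_lt_of_le h2 with h2' | h2'
  · -- i + 1 = iR
    have h3 : ¬ iR ≤ i := by omega
    have h4 : ¬ i + 1 ≤ iL := by omega
    have h5 : iR ≤ i + 1 := by omega
    simp only [hy0, h1, if_neg, h3, if_false, h4, h5, if_pos, if_true]
    have hiR : ((i:ℝ)) < iR := by exact_mod_cast (by omega : i < iR)
    have hkey : ((i:ℝ) - iL) * c < ((iR:ℝ) - iL) * c := by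
      apply mul_lt_mul_of_pos_right _ hcpos
      linarith
    have hcancel : ((iR:ℝ) - iL) * c = x iR - x iL := by
      rw [hc, mul_div_assoc']
      exact mul_div_cancel_left₀ _ (by linarith)
    rw [← h2']
    push_cast
    nlinarith [hkey, hcancel]
  · -- iR ≤ i
    have h3 : iR ≤ i := by omega
    have h4 : iR ≤ i + 1 := by omega
    have h5 : ¬ i + 1 ≤ iL := by omega
    simp only [hy0, h1, if_neg, h3, if_pos, h4, h5, if_true]
    exact hxr i h3 hiN

lemma exists_min {s : ℝ} (hs : 1 < s) {N iL iR : ℕ} (hN : 1 ≤ N)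
    (hLR : iL < iR) (hRN : iR ≤ N) {x : ℕ → ℝ}
    {y0 : ℕ → ℝ} (hy0 : admis N iL iR x y0) :
    ∃ y : ℕ → ℝ, admis N iL iR x y ∧
      ∀ z, admis N iL iR x z → calE s N y ≤ calE s N z := by
  have hs0 : (0:ℝ) < s := by linarith
  set E0 := calE s N y0 with hE0def
  have hE0 : 0 < E0 := calE_pos hN (fun i j hij hjN => gap_pos hy0.2.2 hij hjN)
  -- δ1 : min gap of y0
  have hrne : (range N).Nonempty := ⟨0, by simp; omega⟩
  set δ1 := (range N).inf' hrne (fun i => y0 (i+1) - y0 i) with hδ1def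
  have hδ1pos : 0 < δ1 := by
    rw [Finset.lt_inf'_iff]
    intro i hi
    rw [Finset.mem_range] at hi
    exact sub_pos.mpr (hy0.2.2 i hi)
  have hδ1le : ∀ i, i < N → δ1 ≤ y0 (i+1) - y0 i := fun i hi =>
    Finset.inf'_le _ (by rwa [Finset.mem_range])
  set δ2 := (2*E0) ^ (-(1/s)) with hδ2def
  have hδ2pos : 0 < δ2 := Real.rpow_pos_of_pos (by linarith) _
  have hδ2key : δ2 ^ (-s) = 2*E0 := by
    rw [hδ2def, ← Real.rpow_mul (by linarith : (0:ℝ) ≤ 2*E0)]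
    have hexp : (-(1/s)) * (-s) = 1 := by
      field_simp
    rw [hexp, Real.rpow_one]
  set δ := min δ1 δ2 with hδdef
  have hδpos : 0 < δ := lt_min hδ1pos hδ2pos
  set K := {y : ℕ → ℝ | (∀ i, i ≤ iL → y i = x i) ∧ (∀ i, iR ≤ i → y i = x i) ∧
      (∀ i, i < N → y i + δ ≤ y (i+1))} with hKdef
  have hKA : ∀ y ∈ K, admis N iL iR x y := by
    rintro y ⟨h1, h2, h3⟩
    exact ⟨h1, h2, fun i hi => by linarith [h3 i hi]⟩
  have hy0K : y0 ∈ K := ⟨hy0.1, hy0.2.1, fun i hi => by linarith [hδ1le i hi, min_le_left δ1 δ2]⟩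
  have hKclosed : IsClosed K := by
    have : K = ⋂ i, ({y : ℕ → ℝ | i ≤ iL → y i = x i} ∩ {y | iR ≤ i → y i = x i}
        ∩ {y | i < N → y i + δ ≤ y (i+1)}) := by
      ext y
      simp only [hKdef, Set.mem_setOf_eq, Set.mem_iInter, Set.mem_inter_iff]
      exact ⟨fun h i => ⟨⟨fun hi => h.1 i hi, fun hi => h.2.1 i hi⟩, fun hi => h.2.2 i hi⟩,
        fun h => ⟨fun i hi => (h i).1.1 hi, fun i hi => (h i).1.2 hi, fun i hi => (h i).2 hi⟩⟩
    rw [this]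
    refine isClosed_iInter fun i => (IsClosed.inter (IsClosed.inter ?_ ?_) ?_)
    · by_cases h : i ≤ iL
      · simpa [h] using isClosed_eq (continuous_apply i) continuous_const
      · simp [h]
    · by_cases h : iR ≤ i
      · simpa [h] using isClosed_eq (continuous_apply i) continuous_const
      · simp [h]
    · by_cases h : i < N
      · simpa [h] using isClosed_le ((continuous_apply i).add continuous_const)
          (continuous_apply (i+1))
      · simp [h]
  set C : ℕ → Set ℝ := fun i => if iL < i ∧ i < iR then Set.Icc (x iL) (x iR) else {x i}
    with hCdef
  have hsub : K ⊆ Set.pi Set.univ C := by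
    rintro y ⟨h1, h2, h3⟩ i _
    have hchain : ∀ i, i < N → y i < y (i+1) := fun i hi => by linarith [h3 i hi]
    by_cases h : iL < i ∧ i < iR
    · simp only [hCdef, h, if_pos]
      constructor
      · rw [← h1 iL le_rfl]
        exact (chain_lt hchain iL i h.1 (by omega)).le
      · rw [← h2 iR le_rfl]
        exact (chain_lt hchain i iR h.2 hRN).le
    · simp only [hCdef, h, if_neg, Set.mem_singleton_iff]
      rcases not_and_or.mp h with h' | h'
      · exact h1 i (by omega)
      · exact h2 i (by omega)
  have hCcomp : IsCompact (Set.pi Set.univ C) := by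
    apply isCompact_univ_pi
    intro i
    by_cases h : iL < i ∧ i < iR
    · simp only [hCdef, h, if_pos]; exact isCompact_Icc
    · simp only [hCdef, h, if_neg]; exact isCompact_singleton
  have hKcomp : IsCompact K := hCcomp.of_isClosed_subset hKclosed hsub
  have hcont : ContinuousOn (calE s N) K := by
    intro y hy
    apply ContinuousAt.continuousWithinAt
    have hchain : ∀ i j, i < j → j ≤ N → 0 < y j - y i :=
      fun i j hij hjN => gap_pos (fun i hi => by linarith [hy.2.2 i hi]) hij hjN
    unfold calE
    apply tendsto_finset_sum
    intro i _
    apply tendsto_finset_sum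
    intro j hj
    rw [Finset.mem_Icc] at hj
    exact (((continuous_apply j).continuousAt).sub
      ((continuous_apply i).continuousAt)).rpow_const
      (Or.inl (hchain i j (by omega) hj.2).ne')
  obtain ⟨y, hyK, hymin⟩ := hKcomp.exists_isMinOn ⟨y0, hy0K⟩ hcont
  refine ⟨y, hKA y hyK, ?_⟩
  intro z hz
  by_cases hzK : ∀ i, i < N → δ ≤ z (i+1) - z i
  · exact isMinOn_iff.mp hymin z ⟨hz.1, hz.2.1, fun i hi => by linarith [hzK i hi]⟩
  · push_neg at hzK
    obtain ⟨i0, hi0N, hi0⟩ := hzK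
    have hgap : 0 < z (i0+1) - z i0 := sub_pos.mpr (hz.2.2 i0 hi0N)
    have h1 : (δ:ℝ) ^ (-s) < (z (i0+1) - z i0) ^ (-s) :=
      Real.rpow_lt_rpow_of_neg hgap hi0 (by linarith)
    have h2 : δ2 ^ (-s) ≤ δ ^ (-s) :=
      Real.rpow_le_rpow_of_nonpos hδpos (min_le_right δ1 δ2) (by linarith)
    have h3 : (z (i0+1) - z i0) ^ (-s) ≤ calE s N z :=
      term_le_calE (fun i j hij hjN => gap_pos hz.2.2 hij hjN) (by omega) (by omega)
    have h4 : calE s N y ≤ E0 := isMinOn_iff.mp hymin y0 hy0K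
    rw [hδ2key] at h2
    linarith

end Aux

theorem stmt5 (s : ℝ) (hs : 1 < s) (N iL iR : ℕ) (hN : 1 ≤ N)
    (hLR : iL < iR) (hLR2 : iL + 1 < iR) (hRN : iR ≤ N)
    (x : ℕ → ℝ)
    (hxl : ∀ i, i < iL → x i < x (i + 1))
    (hxr : ∀ i, iR ≤ i → i < N → x i < x (i + 1))
    (hmid : x iL < x iR) :
    ∃ y : ℕ → ℝ, admis N iL iR x y ∧
      (∀ y', admis N iL iR x y' → calE s N y ≤ calE s N y') ∧
      (∀ y', admis N iL iR x y' →
        (∀ y'', admis N iL iR x y'' → calE s N y' ≤ calE s N y'') → y' = y) ∧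
      (∀ k₁ k₂, iL ≤ k₁ → k₁ < iR → iL ≤ k₂ → k₂ < iR →
        repP s N y k₁ = repP s N y k₂) ∧
      (∀ y', admis N iL iR x y' →
        (∀ k₁ k₂, iL ≤ k₁ → k₁ < iR → iL ≤ k₂ → k₂ < iR →
          repP s N y' k₁ = repP s N y' k₂) → y' = y) := by
  have hs0 : (0:ℝ) < s := by linarith
  obtain ⟨y0, hy0⟩ := exists_admis hLR hLR2 hRN hxl hxr hmid
  obtain ⟨y, hyA, hymin⟩ := exists_min hs hN hLR hRN hy0
  -- any minimizer has equal adjacent repulsions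
  have hcrit_of_min : ∀ u, admis N iL iR x u →
      (∀ z, admis N iL iR x z → calE s N u ≤ calE s N z) →
      ∀ m, iL < m → m < iR → repP s N u (m-1) = repP s N u m := by
    intro u huA humin m hm1 hm2
    have hpos : ∀ i j, i < j → j ≤ N → 0 < u j - u i := fun i j a b => gap_pos huA.2.2 a b
    set d : ℕ → ℝ := fun i => if i = m then 1 else 0 with hd
    have hder := hasDerivAt_calE s d hpos
    have hlocal : IsLocalMin (fun t => calE s N (fun i => u i + t * d i)) 0 := by
      set ε := min (u m - u (m-1)) (u (m+1) - u m) with hε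
      have hεpos : 0 < ε :=
        lt_min (hpos (m-1) m (by omega) (by omega)) (hpos m (m+1) (by omega) (by omega))
      have hmem : Set.Ioo (-ε) ε ∈ nhds (0:ℝ) := Ioo_mem_nhds (by linarith) hεpos
      filter_upwards [hmem] with t ht
      have hε1 : ε ≤ u m - u (m-1) := min_le_left _ _
      have hε2 : ε ≤ u (m+1) - u m := min_le_right _ _
      have hadm : admis N iL iR x (fun i => u i + t * d i) := by
        refine ⟨fun i hi => ?_, fun i hi => ?_, fun i hi => ?_⟩
        · have hne : i ≠ m := by omega
          simp only [hd, if_neg hne, mul_zero, add_zero]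
          exact huA.1 i hi
        · have hne : i ≠ m := by omega
          simp only [hd, if_neg hne, mul_zero, add_zero]
          exact huA.2.1 i hi
        · by_cases hA : i = m
          · have hA1 : i + 1 ≠ m := by omega
            simp only [hd, if_pos hA, if_neg hA1, mul_one, mul_zero, add_zero]
            have he1 : m + 1 = i + 1 := by omega
            rw [he1] at hε2
            have he2 : u m = u i := by rw [hA]
            rw [he2] at hε2
            linarith [ht.2]
          · by_cases hB : i + 1 = m
            · simp only [hd, if_neg hA, if_pos hB, mul_one, mul_zero, add_zero]
              have he1 : m - 1 = i := by omega
              rw [he1] at hε1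
              have he2 : u m = u (i+1) := by rw [hB]
              rw [he2] at hε1
              linarith [ht.1]
            · simp only [hd, if_neg hA, if_neg hB, mul_zero, add_zero]
              exact huA.2.2 i hi
      have h0 : (fun i => u i + (0:ℝ) * d i) = u := by funext i; ring
      show calE s N (fun i => u i + (0:ℝ) * d i) ≤ calE s N (fun i => u i + t * d i)
      rw [h0]
      exact humin _ hadm
    have hD0 := hlocal.hasDerivAt_eq_zero hder
    rw [sum_pairs] at hD0
    rw [Finset.sum_eq_single_of_mem m (by simp; omega)
      (fun b _ hb => by simp [hd, hb])] at hD0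
    simp only [hd, if_pos rfl, one_mul] at hD0
    have hA : (∑ i ∈ range m, -s * (u m - u i) ^ (-s-1))
        = -s * ∑ i ∈ range m, (u m - u i) ^ (-s-1) := (Finset.mul_sum _ _ _).symm
    have hB : (∑ j ∈ Icc (m+1) N, -s * (u j - u m) ^ (-s-1))
        = -s * ∑ j ∈ Icc (m+1) N, (u j - u m) ^ (-s-1) := (Finset.mul_sum _ _ _).symm
    rw [hA, hB, ← mul_sub] at hD0
    have hsne : -s ≠ 0 := by linarith
    have hQ := (mul_eq_zero.mp hD0).resolve_left hsne
    have hrepsub := repP_sub s N u (m := m) (by omega) (by omega)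
    linarith [hrepsub, hQ]
  -- chain of equalities
  have hchainP : ∀ u, (∀ m, iL < m → m < iR → repP s N u (m-1) = repP s N u m) →
      ∀ k₁ k₂, iL ≤ k₁ → k₁ < iR → iL ≤ k₂ → k₂ < iR → repP s N u k₁ = repP s N u k₂ := by
    intro u hstep
    have hbase : ∀ k, iL ≤ k → k < iR → repP s N u k = repP s N u iL := by
      intro k
      induction k with
      | zero =>
        intro h1 _
        have : iL = 0 := by omega
        rw [this]
      | succ k ih =>
        intro h1 h2
        by_cases hk : iL ≤ k
        · have h3 := hstep (k+1) (by omega) h2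
          simp only [Nat.add_sub_cancel] at h3
          rw [← h3]
          exact ih hk (by omega)
        · have : iL = k + 1 := by omega
          rw [this]
    intro k₁ k₂ a b c d
    rw [hbase k₁ a b, hbase k₂ c d]
  -- uniqueness of minimizers
  have huniq : ∀ y₁ y₂, admis N iL iR x y₁ → admis N iL iR x y₂ →
      (∀ z, admis N iL iR x z → calE s N y₁ ≤ calE s N z) →
      (∀ z, admis N iL iR x z → calE s N y₂ ≤ calE s N z) → y₁ = y₂ := by
    intro y₁ y₂ h1 h2 m1 m2
    by_contra hne
    have hstrict := calE_strict_mid hs0 hRN h1 h2 hne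
    have hmem := admis_mid h1 h2
    have e1 : calE s N y₁ ≤ calE s N y₂ := m1 y₂ h2
    have e2 : calE s N y₂ ≤ calE s N y₁ := m2 y₁ h1
    have e3 := m1 _ hmem
    linarith
  -- critical point is a minimizer
  have hmin_of_crit : ∀ u, admis N iL iR x u →
      (∀ k₁ k₂, iL ≤ k₁ → k₁ < iR → iL ≤ k₂ → k₂ < iR → repP s N u k₁ = repP s N u k₂) →
      ∀ z, admis N iL iR x z → calE s N u ≤ calE s N z := by
    intro u hu hcrit z hz
    have hpos : ∀ i j, i < j → j ≤ N → 0 < u j - u i := fun i j a b => gap_pos hu.2.2 a b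
    set d : ℕ → ℝ := fun i => z i - u i with hd
    have hder := hasDerivAt_calE s d hpos
    have hD : (∑ i ∈ range (N+1), ∑ j ∈ Icc (i+1) N,
        (d j - d i) * (-s * (u j - u i) ^ (-s-1))) = 0 := by
      rw [sum_pairs]
      apply Finset.sum_eq_zero
      intro m _
      by_cases hdm : d m = 0
      · rw [hdm, zero_mul]
      · have hmL : iL < m := by
          by_contra h
          push_neg at h
          exact hdm (by simp [hd, hz.1 m h, hu.1 m h])
        have hmR : m < iR := by
          by_contra h
          push_neg at h
          exact hdm (by simp [hd, hz.2.1 m h, hu.2.1 m h])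
        have h1 : repP s N u (m-1) = repP s N u m :=
          hcrit (m-1) m (by omega) (by omega) (by omega) (by omega)
        have h2 := repP_sub s N u (m := m) (by omega) (by omega)
        have h3 : (∑ i ∈ range m, (u m - u i) ^ (-s-1))
            - ∑ j ∈ Icc (m+1) N, (u j - u m) ^ (-s-1) = 0 := by
          rw [← h2, h1]; ring
        have h4 : (∑ i ∈ range m, -s * (u m - u i) ^ (-s-1))
            - ∑ j ∈ Icc (m+1) N, -s * (u j - u m) ^ (-s-1) = 0 := by
          rw [← Finset.mul_sum, ← Finset.mul_sum, ← mul_sub, h3, mul_zero]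
        rw [h4, mul_zero]
    rw [hD] at hder
    set g : ℝ → ℝ := fun t => calE s N (fun i => u i + t * d i) with hg
    have hg0 : g 0 = calE s N u := by
      have h0 : (fun i => u i + (0:ℝ) * d i) = u := by funext i; ring
      simp only [hg, h0]
    have htend : Filter.Tendsto (slope g 0) (nhdsWithin 0 (Set.Ioi 0)) (nhds 0) := by
      have h := hasDerivAt_iff_tendsto_slope.mp hder
      exact h.mono_left (nhdsWithin_mono 0 (fun t ht => ne_of_gt ht))
    have hfinal : (0:ℝ) ≤ calE s N z - calE s N u := by
      apply le_of_tendsto htend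
      filter_upwards [Ioo_mem_nhdsGT_of_mem (Set.mem_Ico.mpr ⟨le_refl 0, zero_lt_one⟩)]
        with t ht
      have hcv := calE_convex hs0 hu.2.2 hz.2.2 (t := 1-t) (u := t)
        (by linarith [ht.2]) ht.1.le (by ring)
      have hcombo : (1-t) • u + t • z = fun i => u i + t * d i := by
        funext i
        rw [combo_apply]
        simp only [hd]
        ring
      rw [hcombo] at hcv
      rw [slope_def_field, hg0, div_le_iff₀ (by simpa using ht.1)]
      calc g t - calE s N u ≤ ((1-t) * calE s N u + t * calE s N z) - calE s N u := by
            have : g t = calE s N (fun i => u i + t * d i) := rfl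
            rw [this]
            linarith [hcv]
        _ = (calE s N z - calE s N u) * (t - 0) := by ring
    linarith
  refine ⟨y, hyA, hymin, ?_, hchainP y (hcrit_of_min y hyA hymin), ?_⟩
  · intro y' hy' hmin'
    exact huniq y' y hy' hyA hmin' hymin
  · intro y' hy' hcrit
    exact huniq y' y hy' hyA (hmin_of_crit y' hy' hcrit) hymin
end

section
/- Fix s > 1, an integer N ≥ 1, indices 0 ≤ i_L < i_R ≤ N with i_L + 1 < i_R, and fixed reals x_0 < x_1 < ⋯ < x_{i_L} and x_{i_R} < x_{i_R+1} < ⋯ < x_N with x_{i_L} < x_{i_R}. Let X* = (x*_{i_L+1},…,x*_{i_R−1}) be the unique global minimizer of ℰ(X) := Σ_{0 ≤ i < j ≤ N} (x_j − x_i)^{−s} on S := { X : x_{i_L} < x_{i_L+1} < ⋯ < x_{i_R−1} < x_{i_R} }, and set x*_i := x_i for 0 ≤ i ≤ i_L and i_R ≤ i ≤ N. Then F_m(X*) = (x_{i_R} − x_{i_L})^{−1} · Σ (x*_{min(j, i_R)} − x*_{max(i, i_L)}) (x*_j − x*_i)^{−s−1}, the sum being over all pairs 0 ≤ i < j ≤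 N with i < i_R and j > i_L, where F_m(X) := min_{i_L ≤ k ≤ i_R−1} P_k(X). -/
open scoped BigOperators

/-- `F_m(X) = min_{i_L ≤ k ≤ i_R - 1} P_k(X)`. -/
noncomputable def Fmin (s : ℝ) (N iL iR : ℕ) (y : ℕ → ℝ) : ℝ :=
  sInf {r : ℝ | ∃ k, iL ≤ k ∧ k < iR ∧ r = repP s N y k}

lemma aux_mono (N : ℕ) (y : ℕ → ℝ) (h : ∀ i, i < N → y i < y (i + 1)) :
    ∀ i j, i < j → j ≤ N → y i < y j := by
  intro i j hij hjN
  induction j with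
  | zero => omega
  | succ j ih =>
    rcases Nat.lt_succ_iff_lt_or_eq.mp hij with h' | h'
    · exact (ih h' (by omega)).trans (h j (by omega))
    · subst h'; exact h i (by omega)

lemma aux_tele (y : ℕ → ℝ) (a b : ℕ) (hab : a ≤ b) :
    ∑ k ∈ Finset.Ico a b, (y (k + 1) - y k) = y b - y a := by
  rw [Finset.sum_Ico_eq_sub _ hab, Finset.sum_range_sub, Finset.sum_range_sub]
  ring

lemma aux_crit (s : ℝ) (hs : 1 < s) (N iL iR : ℕ) (hRN : iR ≤ N)
    (x y : ℕ → ℝ) (hyS : admis N iL iR x y)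
    (hymin : ∀ y', admis N iL iR x y' → calE s N y ≤ calE s N y')
    (m : ℕ) (hm1 : iL < m) (hm2 : m < iR) :
    ∑ j ∈ Finset.Icc (m + 1) N, (y j - y m) ^ (-s - 1)
      = ∑ i ∈ Finset.range m, (y m - y i) ^ (-s - 1) := by
  have hmono := aux_mono N y hyS.2.2
  have hmN : m < N := by omega
  have hm0 : 1 ≤ m := by omega
  have h1 : y (m - 1) < y m := hmono (m - 1) m (by omega) (by omega)
  have h2 : y m < y (m + 1) := hyS.2.2 m (by omega)
  set d : ℕ → ℕ → ℝ := fun i j =>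
    if i = m then s * (y j - y m) ^ (-s - 1)
    else if j = m then -(s * (y m - y i) ^ (-s - 1)) else 0 with hd
  -- derivative of the energy in the m-th coordinate
  have hasD : HasDerivAt (fun t => calE s N (Function.update y m t))
      (∑ i ∈ Finset.range (N + 1), ∑ j ∈ Finset.Icc (i + 1) N, d i j) (y m) := by
    unfold calE
    apply HasDerivAt.fun_sum
    intro i hi
    apply HasDerivAt.fun_sum
    intro j hj
    simp only [Finset.mem_range] at hi
    simp only [Finset.mem_Icc] at hj
    show HasDerivAt (fun t : ℝ => (Function.update y m t j - Function.update y m t i) ^ (-s))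
      (d i j) (y m)
    by_cases hi' : i = m
    · have hjm : j ≠ m := by omega
      have hpos : (0:ℝ) < y j - y m := sub_pos.mpr (hmono m j (by omega) hj.2)
      have hder : HasDerivAt (fun t : ℝ => (y j - t) ^ (-s))
          (s * (y j - y m) ^ (-s - 1)) (y m) := by
        have h := (HasDerivAt.const_sub (y j) (hasDerivAt_id' (y m))).rpow_const
          (p := -s) (Or.inl hpos.ne')
        convert h using 1
        ring
      have hfun : (fun t : ℝ => (Function.update y m t j - Function.update y m t i) ^ (-s))
          = fun t : ℝ => (y j - t) ^ (-s) := by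
        funext t
        rw [Function.update_of_ne hjm, hi', Function.update_self]
      have hval : d i j = s * (y j - y m) ^ (-s - 1) := by
        simp only [hd]
        rw [if_pos hi']
      rw [hfun, hval]
      exact hder
    · by_cases hj' : j = m
      · have hpos : (0:ℝ) < y m - y i := sub_pos.mpr (hmono i m (by omega) (by omega))
        have hder : HasDerivAt (fun t : ℝ => (t - y i) ^ (-s))
            (-(s * (y m - y i) ^ (-s - 1))) (y m) := by
          have h := ((hasDerivAt_id' (y m)).sub_const (y i)).rpow_const
            (p := -s) (Or.inl hpos.ne')
          convert h using 1
          ring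
        have hfun : (fun t : ℝ => (Function.update y m t j - Function.update y m t i) ^ (-s))
            = fun t : ℝ => (t - y i) ^ (-s) := by
          funext t
          rw [Function.update_of_ne hi', hj', Function.update_self]
        have hval : d i j = -(s * (y m - y i) ^ (-s - 1)) := by
          simp only [hd]
          rw [if_neg hi', if_pos hj']
        rw [hfun, hval]
        exact hder
      · have hfun : (fun t : ℝ => (Function.update y m t j - Function.update y m t i) ^ (-s))
            = fun _ : ℝ => (y j - y i) ^ (-s) := by
          funext t
          rw [Function.update_of_ne hi', Function.update_of_ne hj']
        have hval : d i j = 0 := by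
          simp only [hd]
          rw [if_neg hi', if_neg hj']
        rw [hfun, hval]
        exact hasDerivAt_const _ _
  -- local minimality
  have hlm : IsLocalMin (fun t => calE s N (Function.update y m t)) (y m) := by
    have hmem : Set.Ioo (y (m - 1)) (y (m + 1)) ∈ nhds (y m) := Ioo_mem_nhds h1 h2
    refine Filter.eventually_of_mem hmem (fun t ht => ?_)
    show calE s N (Function.update y m (y m)) ≤ _
    rw [Function.update_eq_self]
    apply hymin
    refine ⟨?_, ?_, ?_⟩
    · intro i hi
      rw [Function.update_of_ne (by omega : i ≠ m)]; exact hyS.1 i hi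
    · intro i hi
      rw [Function.update_of_ne (by omega : i ≠ m)]; exact hyS.2.1 i hi
    · intro i hiN
      rcases eq_or_ne i m with rfl | hne
      · rw [Function.update_self, Function.update_of_ne (by omega : i + 1 ≠ i)]
        exact ht.2
      · rcases eq_or_ne (i + 1) m with he | hne2
        · rw [Function.update_of_ne hne, he, Function.update_self]
          have : i = m - 1 := by omega
          rw [this]; exact ht.1
        · rw [Function.update_of_ne hne, Function.update_of_ne hne2]
          exact hyS.2.2 i hiN
  have hzero := hlm.hasDerivAt_eq_zero hasD
  -- compute the derivative sum
  have inner : ∀ i ∈ Finset.range (N + 1), ∑ j ∈ Finset.Icc (i + 1) N, d i j =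
      (if i = m then s * ∑ j ∈ Finset.Icc (m + 1) N, (y j - y m) ^ (-s - 1)
       else if i < m then -(s * (y m - y i) ^ (-s - 1)) else 0) := by
    intro i hi
    by_cases hi' : i = m
    · subst hi'
      simp [hd, Finset.mul_sum]
    · simp only [hd, if_neg hi']
      rw [Finset.sum_ite_eq' (Finset.Icc (i + 1) N) m
        (fun _ => -(s * (y m - y i) ^ (-s - 1)))]
      congr 1
      simp only [Finset.mem_Icc, eq_iff_iff]
      omega
  rw [Finset.sum_congr rfl inner] at hzero
  have split : ∀ i, (if i = m then s * ∑ j ∈ Finset.Icc (m + 1) N, (y j - y m) ^ (-s - 1)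
       else if i < m then -(s * (y m - y i) ^ (-s - 1)) else 0)
      = (if i < m then -(s * (y m - y i) ^ (-s - 1)) else 0)
        + (if i = m then s * ∑ j ∈ Finset.Icc (m + 1) N, (y j - y m) ^ (-s - 1) else 0) := by
    intro i
    by_cases hi' : i = m
    · subst hi'; simp
    · simp [hi']
  rw [Finset.sum_congr rfl (fun i _ => split i), Finset.sum_add_distrib,
    Finset.sum_ite_eq' (Finset.range (N + 1)) m, if_pos (by simp; omega)] at hzero
  have hfil : ∑ i ∈ Finset.range (N + 1),
      (if i < m then -(s * (y m - y i) ^ (-s - 1)) else 0)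
      = -(s * ∑ i ∈ Finset.range m, (y m - y i) ^ (-s - 1)) := by
    rw [← Finset.sum_filter]
    have : (Finset.range (N + 1)).filter (· < m) = Finset.range m := by
      ext a; simp only [Finset.mem_filter, Finset.mem_range]; omega
    rw [this, Finset.mul_sum, ← Finset.sum_neg_distrib]
  rw [hfil] at hzero
  have hs0 : s ≠ 0 := by linarith
  have := sub_eq_zero.mpr (rfl : s * ∑ j ∈ Finset.Icc (m + 1) N, (y j - y m) ^ (-s - 1) = _)
  apply mul_left_cancel₀ hs0
  linarith [hzero]

lemma aux_step (s : ℝ) (hs : 1 < s) (N iL iR : ℕ) (hRN : iR ≤ N)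
    (x y : ℕ → ℝ) (hyS : admis N iL iR x y)
    (hymin : ∀ y', admis N iL iR x y' → calE s N y ≤ calE s N y')
    (k : ℕ) (hk1 : iL ≤ k) (hk2 : k + 1 < iR) :
    repP s N y (k + 1) = repP s N y k := by
  have hc := aux_crit s hs N iL iR hRN x y hyS hymin (k + 1) (by omega) hk2
  unfold repP
  rw [Finset.sum_range_succ]
  have hins : Finset.Icc (k + 1) N = insert (k + 1) (Finset.Icc (k + 1 + 1) N) := by
    ext a; simp only [Finset.mem_Icc, Finset.mem_insert]; omega
  have hnot : (k + 1) ∉ Finset.Icc (k + 1 + 1) N := by simp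
  have hR : ∑ i ∈ Finset.range (k + 1), ∑ j ∈ Finset.Icc (k + 1) N, (y j - y i) ^ (-s - 1)
      = ∑ i ∈ Finset.range (k + 1), ((y (k + 1) - y i) ^ (-s - 1)
          + ∑ j ∈ Finset.Icc (k + 1 + 1) N, (y j - y i) ^ (-s - 1)) := by
    refine Finset.sum_congr rfl fun i _ => ?_
    rw [hins, Finset.sum_insert hnot]
  rw [hR, Finset.sum_add_distrib]
  linarith [hc]

lemma aux_const (s : ℝ) (hs : 1 < s) (N iL iR : ℕ) (hRN : iR ≤ N)
    (x y : ℕ → ℝ) (hyS : admis N iL iR x y)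
    (hymin : ∀ y', admis N iL iR x y' → calE s N y ≤ calE s N y') :
    ∀ k, iL ≤ k → k < iR → repP s N y k = repP s N y iL := by
  intro k
  induction k with
  | zero =>
    intro h _
    have : iL = 0 := by omega
    rw [this]
  | succ k ih =>
    intro hk1 hk2
    by_cases h : iL = k + 1
    · rw [h]
    · have hk : iL ≤ k := by omega
      rw [aux_step s hs N iL iR hRN x y hyS hymin k hk hk2, ih hk (by omega)]

noncomputable def auxG (s : ℝ) (N iL : ℕ) (y : ℕ → ℝ) (k i j : ℕ) : ℝ :=
  if iL ≤ k ∧ i ≤ k ∧ k < j ∧ j ≤ N then (y (k + 1) - y k) * (y j - y i) ^ (-s - 1) else 0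

lemma aux_comb (s : ℝ) (N iL iR : ℕ) (hLR : iL < iR) (hRN : iR ≤ N) (y : ℕ → ℝ) :
    ∑ k ∈ Finset.Ico iL iR, (y (k + 1) - y k) * repP s N y k
      = ∑ i ∈ Finset.range iR, ∑ j ∈ (Finset.Ioc i N).filter (fun j => iL < j),
          (y (min j iR) - y (max i iL)) * (y j - y i) ^ (-s - 1) := by
  -- per-k identity
  have keyk : ∀ k ∈ Finset.Ico iL iR, (y (k + 1) - y k) * repP s N y k
      = ∑ i ∈ Finset.range iR, ∑ j ∈ Finset.range (N + 1), auxG s N iL y k i j := by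
    intro k hk
    simp only [Finset.mem_Ico] at hk
    have hstep : ∀ i ∈ Finset.range iR, ∑ j ∈ Finset.range (N + 1), auxG s N iL y k i j
        = if i ≤ k then ∑ j ∈ Finset.Icc (k + 1) N,
            (y (k + 1) - y k) * (y j - y i) ^ (-s - 1) else 0 := by
      intro i _
      by_cases h1 : i ≤ k
      · rw [if_pos h1]
        have hfil : Finset.Icc (k + 1) N = (Finset.range (N + 1)).filter (fun j => k < j) := by
          ext a; simp only [Finset.mem_Icc, Finset.mem_filter, Finset.mem_range]; omega
        rw [hfil, Finset.sum_filter]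
        refine Finset.sum_congr rfl fun j hj => ?_
        simp only [Finset.mem_range] at hj
        unfold auxG
        by_cases h2 : k < j
        · rw [if_pos ⟨hk.1, h1, h2, by omega⟩, if_pos h2]
        · rw [if_neg (by tauto), if_neg h2]
      · rw [if_neg h1]
        refine Finset.sum_eq_zero fun j _ => ?_
        unfold auxG
        rw [if_neg (by tauto)]
    rw [Finset.sum_congr rfl hstep, Finset.sum_ite, Finset.sum_const_zero, add_zero]
    have hfil2 : (Finset.range iR).filter (fun i => i ≤ k) = Finset.range (k + 1) := by
      ext a; simp only [Finset.mem_filter, Finset.mem_range]; omega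
    rw [hfil2]
    unfold repP
    rw [Finset.mul_sum]
    exact Finset.sum_congr rfl fun i _ => by rw [Finset.mul_sum]
  -- per-(i,j) identity
  have key : ∀ i ∈ Finset.range iR, ∀ j ∈ Finset.range (N + 1),
      ∑ k ∈ Finset.range iR, auxG s N iL y k i j
      = if i < j ∧ iL < j then
          (y (min j iR) - y (max i iL)) * (y j - y i) ^ (-s - 1) else 0 := by
    intro i hi j hj
    simp only [Finset.mem_range] at hi hj
    by_cases hc : i < j ∧ iL < j
    · rw [if_pos hc]
      have hfil : Finset.Ico (max i iL) (min j iR) = (Finset.range iR).filter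
          (fun k => iL ≤ k ∧ i ≤ k ∧ k < j ∧ j ≤ N) := by
        ext a
        simp only [Finset.mem_Ico, Finset.mem_filter, Finset.mem_range, le_max_iff,
          max_le_iff, lt_min_iff, min_le_iff]
        omega
      rw [show (∑ k ∈ Finset.range iR, auxG s N iL y k i j)
          = ∑ k ∈ (Finset.range iR).filter (fun k => iL ≤ k ∧ i ≤ k ∧ k < j ∧ j ≤ N),
              (y (k + 1) - y k) * (y j - y i) ^ (-s - 1) from ?_]
      · rw [← hfil, ← Finset.sum_mul, aux_tele y _ _ (by omega : max i iL ≤ min j iR)]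
      · rw [Finset.sum_filter]
        rfl
    · rw [if_neg hc]
      refine Finset.sum_eq_zero fun k _ => ?_
      unfold auxG
      rw [if_neg]
      rintro ⟨h1, h2, h3, h4⟩
      exact hc ⟨by omega, by omega⟩
  -- assemble
  have hLico : Finset.Ico iL iR = (Finset.range iR).filter (fun k => iL ≤ k) := by
    ext a; simp only [Finset.mem_Ico, Finset.mem_filter, Finset.mem_range]; omega
  calc ∑ k ∈ Finset.Ico iL iR, (y (k + 1) - y k) * repP s N y k
      = ∑ k ∈ Finset.Ico iL iR, ∑ i ∈ Finset.range iR, ∑ j ∈ Finset.range (N + 1),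
          auxG s N iL y k i j := Finset.sum_congr rfl keyk
    _ = ∑ k ∈ Finset.range iR, ∑ i ∈ Finset.range iR, ∑ j ∈ Finset.range (N + 1),
          auxG s N iL y k i j := by
        rw [hLico, Finset.sum_filter]
        refine Finset.sum_congr rfl fun k _ => ?_
        by_cases h : iL ≤ k
        · rw [if_pos h]
        · rw [if_neg h]
          exact (Finset.sum_eq_zero fun i _ => Finset.sum_eq_zero fun j _ => by
            unfold auxG; rw [if_neg (by tauto)]).symm
    _ = ∑ i ∈ Finset.range iR, ∑ j ∈ Finset.range (N + 1), ∑ k ∈ Finset.range iR,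
          auxG s N iL y k i j := by
        rw [Finset.sum_comm]
        exact Finset.sum_congr rfl fun i _ => Finset.sum_comm
    _ = ∑ i ∈ Finset.range iR, ∑ j ∈ Finset.range (N + 1),
          (if i < j ∧ iL < j then
            (y (min j iR) - y (max i iL)) * (y j - y i) ^ (-s - 1) else 0) := by
        refine Finset.sum_congr rfl fun i hi => Finset.sum_congr rfl fun j hj => ?_
        exact key i hi j hj
    _ = ∑ i ∈ Finset.range iR, ∑ j ∈ (Finset.Ioc i N).filter (fun j => iL < j),
          (y (min j iR) - y (max i iL)) * (y j - y i) ^ (-s - 1) := by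
        refine Finset.sum_congr rfl fun i hi => ?_
        have : (Finset.Ioc i N).filter (fun j => iL < j)
            = (Finset.range (N + 1)).filter (fun j => i < j ∧ iL < j) := by
          ext a; simp only [Finset.mem_Ioc, Finset.mem_filter, Finset.mem_range]; omega
        rw [this, Finset.sum_filter]

theorem stmt7 (s : ℝ) (hs : 1 < s) (N iL iR : ℕ) (hN : 1 ≤ N)
    (hLR : iL < iR) (hLR2 : iL + 1 < iR) (hRN : iR ≤ N)
    (x : ℕ → ℝ)
    (hxl : ∀ i, i < iL → x i < x (i + 1))
    (hxr : ∀ i, iR ≤ i → i < N → x i < x (i + 1))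
    (hmid : x iL < x iR)
    (ystar : ℕ → ℝ) (hyS : admis N iL iR x ystar)
    (hymin : ∀ y', admis N iL iR x y' → calE s N ystar ≤ calE s N y') :
    Fmin s N iL iR ystar = (x iR - x iL)⁻¹ *
      ∑ i ∈ Finset.range iR, ∑ j ∈ (Finset.Ioc i N).filter (fun j => iL < j),
        (ystar (min j iR) - ystar (max i iL)) * (ystar j - ystar i) ^ (-s - 1) := by
  have hconst := aux_const s hs N iL iR hRN x ystar hyS hymin
  have hF : Fmin s N iL iR ystar = repP s N ystar iL := by
    have hset : {r : ℝ | ∃ k, iL ≤ k ∧ k < iR ∧ r = repP s N ystar k}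
        = {repP s N ystar iL} := by
      ext r
      simp only [Set.mem_setOf_eq, Set.mem_singleton_iff]
      constructor
      · rintro ⟨k, hk1, hk2, rfl⟩
        exact hconst k hk1 hk2
      · rintro rfl
        exact ⟨iL, le_rfl, hLR, rfl⟩
    rw [Fmin, hset, csInf_singleton]
  have hsum : ∑ k ∈ Finset.Ico iL iR, (ystar (k + 1) - ystar k) * repP s N ystar k
      = (x iR - x iL) * repP s N ystar iL := by
    have hcg : ∀ k ∈ Finset.Ico iL iR, (ystar (k + 1) - ystar k) * repP s N ystar k
        = (ystar (k + 1) - ystar k) * repP s N ystar iL := by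
      intro k hk
      simp only [Finset.mem_Ico] at hk
      rw [hconst k hk.1 hk.2]
    rw [Finset.sum_congr rfl hcg, ← Finset.sum_mul, aux_tele ystar iL iR (le_of_lt hLR),
      hyS.2.1 iR le_rfl, hyS.1 iL le_rfl]
  rw [hF, ← aux_comb s N iL iR hLR hRN ystar, hsum,
    inv_mul_cancel_left₀ (ne_of_gt (sub_pos.mpr hmid))]
end

section
/- Let x : ℝ → ℝ^d be a C^4 map with x(z+1) = x(z) for all z, ‖x'(z)‖ = 1 for all z, and x injective on [0,1). Then there exists r_0 > 0 such that for all y, z ∈ ℝ, ‖x(y) − x(z)‖ ≥ min( d(y,z)/2 , r_0 ), where d(y,z) := min_{k ∈ ℤ} |y − z + k| is the distance on the circle ℝ/ℤ. -/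
open scoped BigOperators

/-- The distance on the circle `ℝ/ℤ`: `d(y,z) = min_{k ∈ ℤ} |y - z + k|`. -/
noncomputable def torDist (y z : ℝ) : ℝ := ⨅ k : ℤ, |y - z + (k : ℝ)|

lemma torDist_le (y z : ℝ) (k : ℤ) : torDist y z ≤ |y - z + k| :=
  ciInf_le ⟨0, by rintro _ ⟨k, rfl⟩; positivity⟩ k

lemma torDist_eq (y z : ℝ) : torDist y z = |y - z - round (y - z)| := by
  refine le_antisymm ?_ (le_ciInf fun k => ?_)
  · have := torDist_le y z (-(round (y - z)))
    simpa [sub_eq_add_neg] using this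
  · have := round_le (y - z) (-k)
    simpa [sub_neg_eq_add] using this

lemma torDist_shift (u w : ℝ) (k l : ℤ) : torDist (u - k) (w - l) = torDist u w := by
  rw [torDist_eq, torDist_eq]
  have h : u - (k:ℝ) - (w - (l:ℝ)) = (u - w) - ((k - l : ℤ) : ℝ) := by push_cast; ring
  rw [h, round_sub_intCast]
  congr 1
  push_cast
  ring

theorem stmt8 (d : ℕ) (x : ℝ → EuclideanSpace ℝ (Fin d))
    (hC4 : ContDiff ℝ 4 x)
    (hper : ∀ z : ℝ, x (z + 1) = x z)
    (hunit : ∀ z : ℝ, ‖deriv x z‖ = 1)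
    (hinj : Set.InjOn x (Set.Ico (0 : ℝ) 1)) :
    ∃ r₀ : ℝ, 0 < r₀ ∧ ∀ y z : ℝ, ‖x y - x z‖ ≥ min (torDist y z / 2) r₀ := by
  have hp : Function.Periodic x 1 := hper
  have hZ : ∀ (z : ℝ) (k : ℤ), x (z + k) = x z := by
    intro z k
    simpa using (hp.int_mul k) z
  have hdiff : Differentiable ℝ x := hC4.differentiable (by norm_num)
  have hC3 : ContDiff ℝ 3 (deriv x) := by
    have h4 : ContDiff ℝ ((3 : ℕ∞) + 1) x := by exact_mod_cast hC4
    exact (contDiff_succ_iff_deriv.mp h4).2.2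
  have hdiff' : Differentiable ℝ (deriv x) := hC3.differentiable (by norm_num)
  have hcont'' : Continuous (deriv (deriv x)) := hC3.continuous_deriv (by norm_num)
  obtain ⟨M₀, hM₀⟩ := (isCompact_Icc (a := (-1:ℝ)) (b := 2)).exists_bound_of_continuousOn
    hcont''.continuousOn
  set M := max M₀ 0 with hM
  have hMnn : 0 ≤ M := le_max_right _ _
  have hlip : ∀ a ∈ Set.Icc (-1:ℝ) 2, ∀ b ∈ Set.Icc (-1:ℝ) 2,
      ‖deriv x a - deriv x b‖ ≤ M * |a - b| := by
    intro a ha b hb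
    have := (convex_Icc (-1:ℝ) 2).norm_image_sub_le_of_norm_hasDerivWithin_le
      (f := deriv x) (f' := deriv (deriv x)) (C := M)
      (fun t ht => (hdiff' t).hasDerivAt.hasDerivWithinAt)
      (fun t ht => le_trans (hM₀ t ht) (le_max_left _ _)) hb ha
    simpa [Real.norm_eq_abs] using this
  -- the small-distance threshold
  set δ : ℝ := min (1/4) (1/(2*(M+1))) with hδdef
  have hδpos : 0 < δ := by
    apply lt_min (by norm_num)
    positivity
  have hδ4 : δ ≤ 1/4 := min_le_left _ _
  have hδM : M * δ ≤ 1/2 := by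
    have h1 : δ ≤ 1/(2*(M+1)) := min_le_right _ _
    have h2 : M * δ ≤ M * (1/(2*(M+1))) := by
      exact mul_le_mul_of_nonneg_left h1 hMnn
    calc M * δ ≤ M * (1/(2*(M+1))) := h2
      _ ≤ 1/2 := by
          rw [mul_one_div, div_le_div_iff₀ (by positivity) (by norm_num)]
          nlinarith
  -- small regime estimate
  have hsmall : ∀ a ∈ Set.Icc (-1:ℝ) 2, ∀ b ∈ Set.Icc (-1:ℝ) 2, |a - b| ≤ δ →
      ‖x a - x b‖ ≥ |a - b| / 2 := by
    intro a ha b hb hab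
    set v := deriv x b with hv
    set g : ℝ → EuclideanSpace ℝ (Fin d) := fun t => x t - t • v with hg
    have hsub : Set.uIcc b a ⊆ Set.Icc (-1:ℝ) 2 :=
      Set.uIcc_subset_Icc hb ha
    have hbound : ∀ t ∈ Set.uIcc b a, ‖deriv x t - v‖ ≤ M * |a - b| := by
      intro t ht
      refine le_trans (hlip t (hsub ht) b hb) ?_
      have : |t - b| ≤ |a - b| := by
        rcases Set.mem_uIcc.mp ht with h | h <;> rw [abs_sub_le_iff] <;>
          constructor <;> linarith [le_abs_self (a-b), neg_abs_le (a-b), abs_nonneg (a-b), h.1, h.2]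
      exact mul_le_mul_of_nonneg_left this hMnn
    have hgd : ∀ t ∈ Set.uIcc b a, HasDerivWithinAt g (deriv x t - v) (Set.uIcc b a) t := by
      intro t ht
      exact ((hdiff t).hasDerivAt.sub ((hasDerivAt_id t).smul_const v)).hasDerivWithinAt.congr_deriv
        (by rw [one_smul])
    have hest := (convex_uIcc b a).norm_image_sub_le_of_norm_hasDerivWithin_le
      hgd hbound (Set.left_mem_uIcc) (Set.right_mem_uIcc)
    -- ‖g a - g b‖ ≤ M * |a-b| * ‖a - b‖
    have hga : g a - g b = (x a - x b) - (a - b) • v := by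
      simp only [hg]
      rw [sub_smul]
      abel
    have h1 : ‖(a - b) • v‖ = |a - b| := by
      rw [norm_smul, Real.norm_eq_abs, hunit b, mul_one]
    have key := norm_sub_norm_le ((a-b) • v) ((a-b) • v - (x a - x b))
    rw [show (a-b) • v - ((a-b) • v - (x a - x b)) = x a - x b by abel] at key
    have hw : ‖(a-b) • v - (x a - x b)‖ = ‖g a - g b‖ := by rw [hga, norm_sub_rev]
    rw [hw, h1] at key
    rw [Real.norm_eq_abs] at hest
    nlinarith [mul_le_mul_of_nonneg_left hab (mul_nonneg hMnn (abs_nonneg (a-b))),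
      mul_le_mul_of_nonneg_right hδM (abs_nonneg (a-b)), abs_nonneg (a-b)]
  -- the compact set for the large regime
  set S : Set (ℝ × ℝ) := {p | p.1 ∈ Set.Icc (0:ℝ) 1 ∧ p.2 ∈ Set.Icc (0:ℝ) 1 ∧
      δ ≤ |p.1 - p.2| ∧ |p.1 - p.2| ≤ 1 - δ} with hSdef
  have hScompact : IsCompact S := by
    have hSeq : S = (Set.Icc (0:ℝ) 1 ×ˢ Set.Icc (0:ℝ) 1) ∩
        ({p : ℝ × ℝ | δ ≤ |p.1 - p.2|} ∩ {p : ℝ × ℝ | |p.1 - p.2| ≤ 1 - δ}) := by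
      ext p
      simp only [hSdef, Set.mem_setOf_eq, Set.mem_inter_iff, Set.mem_prod]
      tauto
    rw [hSeq]
    exact (isCompact_Icc.prod isCompact_Icc).inter_right
      ((isClosed_le continuous_const (continuous_fst.sub continuous_snd).abs).inter
        (isClosed_le (continuous_fst.sub continuous_snd).abs continuous_const))
  have hSne : S.Nonempty := by
    refine ⟨(0, 1/2), ?_, ?_, ?_, ?_⟩
    · norm_num
    · norm_num
    · have : |(0:ℝ) - 1/2| = 1/2 := by rw [abs_sub_comm]; norm_num
      rw [this]; linarith
    · have : |(0:ℝ) - 1/2| = 1/2 := by rw [abs_sub_comm]; norm_num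
      rw [this]; linarith
  obtain ⟨p, hpS, hpmin⟩ := hScompact.exists_isMinOn hSne
    (((hC4.continuous.comp continuous_fst).sub (hC4.continuous.comp continuous_snd)).norm.continuousOn
      (s := S))
  set r₀ : ℝ := ‖x p.1 - x p.2‖ with hr₀def
  -- injectivity on S
  have hne : ∀ b c : ℝ, b ∈ Set.Icc (0:ℝ) 1 → c ∈ Set.Icc (0:ℝ) 1 →
      δ ≤ |b - c| → |b - c| ≤ 1 - δ → x b ≠ x c := by
    intro b c hb hc h1 h2 hxe
    have h10 : x 1 = x 0 := by simpa using hper 0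
    set b' : ℝ := if b = 1 then 0 else b with hb'
    set c' : ℝ := if c = 1 then 0 else c with hc'
    have hxb : x b' = x b := by
      by_cases h : b = 1 <;> simp [hb', h, h10.symm]
    have hxc : x c' = x c := by
      by_cases h : c = 1 <;> simp [hc', h, h10.symm]
    have hbmem : b' ∈ Set.Ico (0:ℝ) 1 := by
      by_cases h : b = 1 <;> simp [hb', h]
      exact ⟨hb.1, lt_of_le_of_ne hb.2 h⟩
    have hcmem : c' ∈ Set.Ico (0:ℝ) 1 := by
      by_cases h : c = 1 <;> simp [hc', h]
      exact ⟨hc.1, lt_of_le_of_ne hc.2 h⟩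
    have heq : b' = c' := hinj hbmem hcmem (by rw [hxb, hxc, hxe])
    by_cases h1b : b = 1
    · by_cases h1c : c = 1
      · rw [h1b, h1c] at h1; simp at h1; linarith [hδpos]
      · have hcz : c = 0 := by simpa [hb', hc', h1b, h1c] using heq.symm
        rw [h1b, hcz] at h2; simp at h2; linarith [hδpos]
    · by_cases h1c : c = 1
      · have hbz : b = 0 := by simpa [hb', hc', h1b, h1c] using heq
        rw [h1c, hbz] at h2
        rw [show |(0:ℝ) - 1| = 1 by rw [abs_sub_comm]; norm_num] at h2
        linarith [hδpos]
      · have hbc : b = c := by simpa [hb', hc', h1b, h1c] using heq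
        rw [hbc] at h1; simp at h1; linarith [hδpos]
  have hr₀pos : 0 < r₀ := by
    obtain ⟨hp1, hp2, hpa, hpb⟩ := hpS
    rw [hr₀def, norm_pos_iff, sub_ne_zero]
    exact hne p.1 p.2 hp1 hp2 hpa hpb
  refine ⟨r₀, hr₀pos, ?_⟩
  intro y z
  set c0 : ℝ := y - z with hc0
  set a : ℝ := y - (round c0 : ℝ) with ha
  have hxa : x a = x y := by
    have := hZ a (round c0)
    rw [show a + (round c0 : ℝ) = y by rw [ha]; ring] at this
    exact this.symm
  have hdle : torDist y z ≤ 1/2 := by rw [torDist_eq]; exact abs_sub_round _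
  set z' : ℝ := z - (⌊z⌋ : ℝ) with hz'
  set a' : ℝ := a - (⌊z⌋ : ℝ) with ha'
  have hxz' : x z' = x z := by
    have := hZ z' ⌊z⌋
    rw [show z' + (⌊z⌋ : ℝ) = z by rw [hz']; ring] at this
    exact this.symm
  have hxa' : x a' = x a := by
    have := hZ a' ⌊z⌋
    rw [show a' + (⌊z⌋ : ℝ) = a by rw [ha']; ring] at this
    exact this.symm
  have hz'mem : z' ∈ Set.Ico (0:ℝ) 1 := by
    rw [hz']
    exact ⟨by linarith [Int.floor_le z], by linarith [Int.lt_floor_add_one z]⟩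
  have hdeq : |a' - z'| = torDist y z := by
    rw [torDist_eq, ha', ha, hz', hc0]
    congr 1
    ring
  have ha'mem : a' ∈ Set.Icc (-1:ℝ) 2 := by
    have h1 : |a' - z'| ≤ 1/2 := by rw [hdeq]; exact hdle
    rcases abs_le.mp h1 with ⟨hl, hr⟩
    constructor <;> [linarith [hz'mem.1, hz'mem.2]; linarith [hz'mem.1, hz'mem.2]]
  have hz'mem2 : z' ∈ Set.Icc (-1:ℝ) 2 :=
    ⟨by linarith [hz'mem.1], by linarith [hz'mem.2]⟩
  have hxyz : ‖x y - x z‖ = ‖x a' - x z'‖ := by rw [hxa', hxa, hxz']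
  rcases le_or_gt |a' - z'| δ with hcase | hcase
  · -- small regime
    have := hsmall a' ha'mem z' hz'mem2 hcase
    rw [hxyz]
    calc min (torDist y z / 2) r₀ ≤ torDist y z / 2 := min_le_left _ _
      _ = |a' - z'| / 2 := by rw [hdeq]
      _ ≤ ‖x a' - x z'‖ := this
  · -- large regime
    set b : ℝ := a' - (⌊a'⌋ : ℝ) with hb
    have hxb : x b = x a' := by
      have := hZ b ⌊a'⌋
      rw [show b + (⌊a'⌋ : ℝ) = a' by rw [hb]; ring] at this
      exact this.symm
    have hbmem : b ∈ Set.Ico (0:ℝ) 1 := by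
      rw [hb]
      exact ⟨by linarith [Int.floor_le a'], by linarith [Int.lt_floor_add_one a']⟩
    have htb : torDist b z' = torDist y z := by
      have h1 : torDist b z' = torDist a' z' := by
        have := torDist_shift a' z' ⌊a'⌋ 0
        simpa [hb] using this
      have h2 : torDist a' z' = torDist y z := by
        calc torDist a' z' = torDist a z := by
              rw [ha', hz']; exact torDist_shift a z ⌊z⌋ ⌊z⌋
          _ = torDist y z := by
              have := torDist_shift y z (round c0) 0
              simpa [ha, hc0] using this
      rw [h1, h2]
    have hδlt : δ < torDist y z := by rw [← hdeq]; exact hcase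
    have hb0 : torDist y z ≤ |b - z'| := by
      have := torDist_le b z' 0
      simpa [htb] using this
    have hb1 : |b - z'| ≤ 1 - δ := by
      rcases le_total z' b with hle | hle
      · have := torDist_le b z' (-1)
        rw [htb] at this
        have habs : |b - z' + ((-1:ℤ):ℝ)| = 1 - (b - z') := by
          rw [abs_of_nonpos (by push_cast; linarith [hbmem.2, hz'mem.1])]
          push_cast; ring
        rw [habs] at this
        rw [abs_of_nonneg (by linarith)]
        linarith
      · have := torDist_le b z' 1
        rw [htb] at this
        have habs : |b - z' + ((1:ℤ):ℝ)| = 1 - (z' - b) := by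
          rw [abs_of_nonneg (by push_cast; linarith [hbmem.1, hz'mem.2])]
          push_cast; ring
        rw [habs] at this
        rw [abs_of_nonpos (by linarith)]
        linarith
    have hbS : (b, z') ∈ S :=
      ⟨⟨hbmem.1, le_of_lt hbmem.2⟩, ⟨hz'mem.1, le_of_lt hz'mem.2⟩,
        le_trans (le_of_lt hδlt) hb0, hb1⟩
    have hmin := isMinOn_iff.mp hpmin (b, z') hbS
    calc min (torDist y z / 2) r₀ ≤ r₀ := min_le_right _ _
      _ ≤ ‖x b - x z'‖ := hmin
      _ = ‖x y - x z‖ := by rw [hxb, hxyz]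
end

section
/- Let x : ℝ → ℝ^d be a C^4 map with x(z+1) = x(z) for all z, ‖x'(z)‖ = 1 for all z, and x injective on [0,1), and let s > 1. Suppose z = (z_1,…,z_N) : [0,∞) → ℝ^N is differentiable, satisfies z_1(t) < ⋯ < z_N(t) < z_1(t) + 1 for all t ≥ 0, and solves ż_i(t) = V_i(z(t)) for all i and t. Then t ↦ E(z(t)) is differentiable and (d/dt) E(z(t)) = −(1/N) Σ_{i=1}^N |ż_i(t)|² for all t ≥ 0. -/
open scoped BigOperators

/-- `E(Z) = N^{-s-1} Σ_{1 ≤ i < j ≤ N} ‖x(z_i) - x(z_j)‖^{-s} / s`. -/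
noncomputable def energyE (d : ℕ) (s : ℝ) (N : ℕ) (x : ℝ → EuclideanSpace ℝ (Fin d))
    (z : ℤ → ℝ) : ℝ :=
  (N : ℝ) ^ (-s - 1) *
    ∑ i ∈ Finset.Icc (1 : ℤ) (N : ℤ), ∑ j ∈ Finset.Icc (i + 1) (N : ℤ),
      ‖x (z i) - x (z j)‖ ^ (-s) / s

/-- The gradient-flow vector field
`V_i(Z) = N^{-s} Σ_{j=i+1}^{i+N-1} ‖x(z_i) - x(z_j)‖^{-s-2} ⟨x(z_i) - x(z_j), x'(z_i)⟩`. -/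
noncomputable def forceV (d : ℕ) (s : ℝ) (N : ℕ) (x : ℝ → EuclideanSpace ℝ (Fin d))
    (z : ℤ → ℝ) (i : ℤ) : ℝ :=
  (N : ℝ) ^ (-s) *
    ∑ j ∈ Finset.Icc (i + 1) (i + (N : ℤ) - 1),
      ‖x (z i) - x (z j)‖ ^ (-s - 2) * (inner ℝ (x (z i) - x (z j)) (deriv x (z i)) : ℝ)


lemma pairDeriv {d : ℕ} (x : ℝ → EuclideanSpace ℝ (Fin d)) (hx : Differentiable ℝ x)
    {s : ℝ} (hs : s ≠ 0) {f g : ℝ → ℝ} {f' g' : ℝ} {t : ℝ}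
    (hf : HasDerivAt f f' t) (hg : HasDerivAt g g' t)
    (hne : x (f t) ≠ x (g t)) :
    HasDerivAt (fun τ => ‖x (f τ) - x (g τ)‖ ^ (-s) / s)
      (-(f' * (‖x (f t) - x (g t)‖ ^ (-s-2) * (inner ℝ (x (f t) - x (g t)) (deriv x (f t)) : ℝ)))
        - g' * (‖x (g t) - x (f t)‖ ^ (-s-2) * (inner ℝ (x (g t) - x (f t)) (deriv x (g t)) : ℝ))) t := by
  set φ : ℝ → EuclideanSpace ℝ (Fin d) := fun τ => x (f τ) - x (g τ) with hφdef
  have hxd : ∀ u : ℝ, HasDerivAt x (deriv x u) u := fun u => (hx u).hasDerivAt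
  have h1 : HasDerivAt (fun τ => x (f τ)) (f' • deriv x (f t)) t := (hxd (f t)).scomp t hf
  have h2 : HasDerivAt (fun τ => x (g τ)) (g' • deriv x (g t)) t := (hxd (g t)).scomp t hg
  have hφ : HasDerivAt φ (f' • deriv x (f t) - g' • deriv x (g t)) t := h1.sub h2
  set w : EuclideanSpace ℝ (Fin d) := f' • deriv x (f t) - g' • deriv x (g t) with hw
  have hr : HasDerivAt (fun τ => (inner ℝ (φ τ) (φ τ) : ℝ))
      ((inner ℝ (φ t) w : ℝ) + (inner ℝ w (φ t) : ℝ)) t := hφ.inner ℝ hφ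
  have hrne : (inner ℝ (φ t) (φ t) : ℝ) ≠ 0 := by
    rw [real_inner_self_eq_norm_sq]
    have : φ t ≠ 0 := sub_ne_zero.mpr hne
    exact pow_ne_zero 2 (norm_ne_zero_iff.mpr this)
  have hpow := (hr.rpow_const (p := -s/2) (Or.inl hrne)).div_const s
  have hnorm : ‖φ t‖ ≠ 0 := norm_ne_zero_iff.mpr (sub_ne_zero.mpr hne)
  have hfun : (fun τ => ‖x (f τ) - x (g τ)‖ ^ (-s) / s)
      = (fun τ => (inner ℝ (φ τ) (φ τ) : ℝ) ^ (-s/2) / s) := by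
    funext τ
    rw [real_inner_self_eq_norm_sq, ← Real.rpow_natCast ‖φ τ‖ 2,
      ← Real.rpow_mul (norm_nonneg _),
      show ((2:ℕ):ℝ) * (-s/2) = -s by push_cast; ring]
  rw [hfun]
  refine hpow.congr_deriv ?_
  symm
  rw [real_inner_self_eq_norm_sq, ← Real.rpow_natCast ‖φ t‖ 2, ← Real.rpow_mul (norm_nonneg _),
    show ((2:ℕ):ℝ) * (-s/2 - 1) = -s - 2 by push_cast; ring]
  have hinner : (inner ℝ (φ t) w : ℝ) + (inner ℝ w (φ t) : ℝ) = 2 * (inner ℝ (φ t) w : ℝ) := by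
    rw [real_inner_comm w (φ t)]; ring
  rw [hinner]
  have hxfg : (inner ℝ (φ t) w : ℝ)
      = f' * (inner ℝ (x (f t) - x (g t)) (deriv x (f t)) : ℝ)
        - g' * (inner ℝ (x (f t) - x (g t)) (deriv x (g t)) : ℝ) := by
    rw [hw, inner_sub_right, real_inner_smul_right, real_inner_smul_right]
  have hswap : (inner ℝ (x (g t) - x (f t)) (deriv x (g t)) : ℝ)
      = -(inner ℝ (x (f t) - x (g t)) (deriv x (g t)) : ℝ) := by
    rw [← inner_neg_left]; congr 1; abel
  have hnormswap : ‖x (g t) - x (f t)‖ = ‖x (f t) - x (g t)‖ := norm_sub_rev _ _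
  rw [hnormswap, hswap, hxfg]
  show _ = 2 * _ * (-s / 2) * ‖x (f t) - x (g t)‖ ^ (-s-2) / s
  field_simp
  ring

lemma xne_of_close {d : ℕ} {x : ℝ → EuclideanSpace ℝ (Fin d)}
    (hper : ∀ z : ℝ, x (z + 1) = x z)
    (hinj : Set.InjOn x (Set.Ico (0 : ℝ) 1))
    {a b : ℝ} (h1 : a < b) (h2 : b < a + 1) : x a ≠ x b := by
  have hint : ∀ (n : ℤ) (u : ℝ), x (u + n) = x u := by
    intro n u
    have := (Function.Periodic.int_mul (f := x) (c := 1) hper n) u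
    simpa using this
  have hfr : ∀ u : ℝ, x u = x (Int.fract u) := by
    intro u
    have : x (Int.fract u) = x (Int.fract u + (⌊u⌋ : ℤ)) := (hint ⌊u⌋ (Int.fract u)).symm
    rw [this, Int.fract]; ring_nf
  intro h
  have hmem : ∀ u : ℝ, Int.fract u ∈ Set.Ico (0:ℝ) 1 :=
    fun u => ⟨Int.fract_nonneg u, Int.fract_lt_one u⟩
  have heq : Int.fract a = Int.fract b := by
    apply hinj (hmem a) (hmem b)
    rw [← hfr, ← hfr, h]
  obtain ⟨k, hk⟩ := Int.fract_eq_fract.mp heq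
  have hk1 : (k : ℝ) < 0 := by rw [← hk]; linarith
  have hk2 : (-1 : ℝ) < k := by rw [← hk]; linarith
  have : (0:ℤ) ≤ k ∨ k ≤ -1 := by omega
  rcases this with h' | h'
  · exact absurd hk1 (not_lt.mpr (by exact_mod_cast h'))
  · exact absurd hk2 (not_lt.mpr (by exact_mod_cast h'))


theorem stmt14 (d : ℕ) (s : ℝ) (hs : 1 < s)
    (x : ℝ → EuclideanSpace ℝ (Fin d))
    (hC4 : ContDiff ℝ 4 x)
    (hper : ∀ z : ℝ, x (z + 1) = x z)
    (hunit : ∀ z : ℝ, ‖deriv x z‖ = 1)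
    (hinj : Set.InjOn x (Set.Ico (0 : ℝ) 1))
    (N : ℕ) (y : ℝ → ℤ → ℝ)
    (hyper : ∀ t : ℝ, 0 ≤ t → ∀ i : ℤ, y t (i + (N : ℤ)) = y t i + 1)
    (hysort : ∀ t : ℝ, 0 ≤ t → ∀ i : ℤ, y t i < y t (i + 1))
    (hflow : ∀ t : ℝ, 0 ≤ t → ∀ i : ℤ,
      HasDerivAt (fun τ => y τ i) (forceV d s N x (y t) i) t) :
    ∀ t : ℝ, 0 ≤ t →
      HasDerivAt (fun τ => energyE d s N x (y τ))
        (-(1 / (N : ℝ)) * ∑ i ∈ Finset.Icc (1 : ℤ) (N : ℤ), (forceV d s N x (y t) i) ^ 2)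
        t := by
  intro t ht
  by_cases hN0 : N = 0
  · subst hN0
    have hempty : Finset.Icc (1 : ℤ) ((0:ℕ) : ℤ) = ∅ := by decide
    simp only [energyE, hempty, Finset.sum_empty, mul_zero, neg_mul]
    simpa using hasDerivAt_const t 0
  have hN : 0 < N := Nat.pos_of_ne_zero hN0
  have hNR : (0:ℝ) < (N:ℝ) := by exact_mod_cast hN
  have hs0 : s ≠ 0 := by linarith
  have hxdiff : Differentiable ℝ x := hC4.differentiable (by norm_num)
  have hmono : StrictMono (y t) := strictMono_int_of_lt_succ (hysort t ht)
  have hxne : ∀ i j : ℤ, i < j → j < i + (N:ℤ) → x (y t i) ≠ x (y t j) := by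
    intro i j hij hjN
    refine xne_of_close hper hinj (hmono hij) ?_
    have := hmono hjN
    rwa [hyper t ht i] at this
  set A : ℤ → ℤ → ℝ := fun i j =>
    ‖x (y t i) - x (y t j)‖ ^ (-s - 2) * (inner ℝ (x (y t i) - x (y t j)) (deriv x (y t i)) : ℝ)
    with hA
  set v : ℤ → ℝ := fun i => forceV d s N x (y t) i with hv
  -- the analytic part
  have hE : HasDerivAt (fun τ => energyE d s N x (y τ))
      ((N:ℝ) ^ (-s - 1) * ∑ i ∈ Finset.Icc (1:ℤ) (N:ℤ), ∑ j ∈ Finset.Icc (i+1) (N:ℤ),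
        (-(v i * A i j) - v j * A j i)) t := by
    unfold energyE
    refine HasDerivAt.const_mul _ (HasDerivAt.fun_sum fun i hi => HasDerivAt.fun_sum fun j hj => ?_)
    rw [Finset.mem_Icc] at hi hj
    exact pairDeriv x hxdiff hs0 (hflow t ht i) (hflow t ht j)
      (hxne i j (by omega) (by omega))
  -- periodicity of A in second argument
  have hAper : ∀ i j : ℤ, A i (j + (N:ℤ)) = A i j := by
    intro i j
    simp only [hA]
    rw [hyper t ht j, hper]
  -- key identity for the V sum
  have hS : ∀ i ∈ Finset.Icc (1:ℤ) (N:ℤ),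
      ∑ j ∈ Finset.Icc (i+1) (i+(N:ℤ)-1), A i j
      = ∑ j ∈ Finset.Icc (i+1) (N:ℤ), A i j + ∑ j ∈ Finset.Icc 1 (i-1), A i j := by
    intro i hi
    rw [Finset.mem_Icc] at hi
    have hsplit : Finset.Icc (i+1) (i+(N:ℤ)-1)
        = Finset.Icc (i+1) (N:ℤ) ∪ Finset.Icc ((N:ℤ)+1) (i+(N:ℤ)-1) := by
      ext k; simp only [Finset.mem_Icc, Finset.mem_union]; omega
    have hdisj : Disjoint (Finset.Icc (i+1) (N:ℤ)) (Finset.Icc ((N:ℤ)+1) (i+(N:ℤ)-1)) := by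
      rw [Finset.disjoint_left]
      intro k hk hk'
      rw [Finset.mem_Icc] at hk hk'
      omega
    rw [hsplit, Finset.sum_union hdisj]
    congr 1
    have hmap : Finset.Icc ((N:ℤ)+1) (i+(N:ℤ)-1)
        = (Finset.Icc (1:ℤ) (i-1)).map (addRightEmbedding (N:ℤ)) := by
      rw [Finset.map_add_right_Icc]
      congr 1 <;> ring
    rw [hmap, Finset.sum_map]
    exact Finset.sum_congr rfl fun j _ => hAper i j
  have hvS : ∀ i ∈ Finset.Icc (1:ℤ) (N:ℤ),
      ∑ j ∈ Finset.Icc (i+1) (N:ℤ), A i j + ∑ j ∈ Finset.Icc 1 (i-1), A i j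
      = (N:ℝ) ^ s * v i := by
    intro i hi
    rw [← hS i hi, hv]
    show _ = (N:ℝ) ^ s * ((N:ℝ) ^ (-s) * _)
    rw [← mul_assoc, ← Real.rpow_add hNR, show s + -s = 0 by ring, Real.rpow_zero, one_mul]
  convert hE using 1
  -- algebra
  have hsplit2 : ∑ i ∈ Finset.Icc (1:ℤ) (N:ℤ), ∑ j ∈ Finset.Icc (i+1) (N:ℤ),
      (-(v i * A i j) - v j * A j i)
      = -(∑ i ∈ Finset.Icc (1:ℤ) (N:ℤ), ∑ j ∈ Finset.Icc (i+1) (N:ℤ), v i * A i j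
        + ∑ i ∈ Finset.Icc (1:ℤ) (N:ℤ), ∑ j ∈ Finset.Icc (i+1) (N:ℤ), v j * A j i) := by
    rw [← Finset.sum_add_distrib]
    rw [← Finset.sum_neg_distrib]
    refine Finset.sum_congr rfl fun i _ => ?_
    rw [← Finset.sum_add_distrib, ← Finset.sum_neg_distrib]
    exact Finset.sum_congr rfl fun j _ => by ring
  have hswap : ∑ i ∈ Finset.Icc (1:ℤ) (N:ℤ), ∑ j ∈ Finset.Icc (i+1) (N:ℤ), v j * A j i
      = ∑ i ∈ Finset.Icc (1:ℤ) (N:ℤ), ∑ j ∈ Finset.Icc (1:ℤ) (i-1), v i * A i j := by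
    rw [Finset.sum_comm' (t' := Finset.Icc (1:ℤ) (N:ℤ))
      (s' := fun j => Finset.Icc (1:ℤ) (j-1)) ?_]
    intro i j
    simp only [Finset.mem_Icc]
    omega
  rw [hsplit2, hswap]
  have hcollect : ∑ i ∈ Finset.Icc (1:ℤ) (N:ℤ), ∑ j ∈ Finset.Icc (i+1) (N:ℤ), v i * A i j
      + ∑ i ∈ Finset.Icc (1:ℤ) (N:ℤ), ∑ j ∈ Finset.Icc (1:ℤ) (i-1), v i * A i j
      = ∑ i ∈ Finset.Icc (1:ℤ) (N:ℤ), (N:ℝ)^s * v i ^ 2 := by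
    rw [← Finset.sum_add_distrib]
    refine Finset.sum_congr rfl fun i hi => ?_
    rw [← Finset.mul_sum, ← Finset.mul_sum, ← mul_add, hvS i hi]
    ring
  rw [hcollect, ← Finset.mul_sum, mul_neg, ← mul_assoc, ← Real.rpow_add hNR,
    show -s - 1 + s = -1 by ring, Real.rpow_neg_one, neg_mul, one_div]
end

section
/- Let s > 0, let N ≥ 2 be an integer, and let Z = (z_1,…,z_N) ∈ ℝ^N satisfy z_1 < z_2 < ⋯ < z_N < z_1 + 1, extended by z_{i+N} = z_i + 1 for all i ∈ ℤ. Then for every integer k with 1 ≤ k ≤ N − 1: s^{−1} k^{−s} ≤ Ẽ^k(Z) ≤ k^{−s} Ẽ^1(Z), where Ẽ^k(Z) := (1/(s N^{s+1})) Σ_{i=1}^N (z_{i+k} − z_i)^{−s}. -/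
open scoped BigOperators

open Finset

/-- Hölder-type key inequality: `n^(s+1) ≤ (∑ x)^s * ∑ x^(-s)`. -/
lemma holder_key {ι : Type*} (T : Finset ι) {s : ℝ} (hs : 0 < s) (x : ι → ℝ)
    (hx : ∀ i ∈ T, 0 < x i) :
    (T.card : ℝ) ^ (s + 1) ≤ (∑ i ∈ T, x i) ^ s * ∑ i ∈ T, x i ^ (-s) := by
  have hs1 : (1 : ℝ) ≤ s + 1 := by linarith
  have h := Real.inner_le_weight_mul_Lp_of_nonneg T hs1
    (fun i => |x i|) (fun i => |x i|⁻¹) (fun i => abs_nonneg _)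
    (fun i => inv_nonneg.2 (abs_nonneg _))
  have e1 : ∑ i ∈ T, |x i| * |x i|⁻¹ = (T.card : ℝ) := by
    rw [Finset.sum_congr rfl (fun i hi => mul_inv_cancel₀ (abs_ne_zero.2 (hx i hi).ne'))]
    simp
  have e2 : ∑ i ∈ T, |x i| = ∑ i ∈ T, x i :=
    Finset.sum_congr rfl fun i hi => abs_of_pos (hx i hi)
  have e3 : ∑ i ∈ T, |x i| * (|x i|⁻¹) ^ (s + 1) = ∑ i ∈ T, x i ^ (-s) := by
    refine Finset.sum_congr rfl fun i hi => ?_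
    have hxi := hx i hi
    rw [abs_of_pos hxi, Real.inv_rpow hxi.le, show -s = 1 - (s + 1) by ring,
      Real.rpow_sub hxi, Real.rpow_one, div_eq_mul_inv]
  simp only [e1, e2, e3] at h
  have hA : 0 ≤ ∑ i ∈ T, x i := Finset.sum_nonneg fun i hi => (hx i hi).le
  have hB : 0 ≤ ∑ i ∈ T, x i ^ (-s) :=
    Finset.sum_nonneg fun i hi => (Real.rpow_pos_of_pos (hx i hi) _).le
  have hc : ((T.card : ℝ)) ^ (s + 1) ≤
      ((∑ i ∈ T, x i) ^ (1 - (s + 1)⁻¹) * (∑ i ∈ T, x i ^ (-s)) ^ (s + 1)⁻¹) ^ (s + 1) :=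
    Real.rpow_le_rpow (Nat.cast_nonneg _) h (by linarith)
  rw [Real.mul_rpow (Real.rpow_nonneg hA _) (Real.rpow_nonneg hB _),
    ← Real.rpow_mul hA, ← Real.rpow_mul hB] at hc
  have hsne : s + 1 ≠ 0 := by linarith
  have h1 : (1 - (s + 1)⁻¹) * (s + 1) = s := by field_simp; ring
  have h2 : (s + 1)⁻¹ * (s + 1) = 1 := inv_mul_cancel₀ hsne
  rwa [h1, h2, Real.rpow_one] at hc

/-- Reindexing a shifted sum over `Icc 1 N`. -/
lemma shift_reindex (N : ℕ) (hN : 1 ≤ N) (f : ℤ → ℝ) :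
    ∑ i ∈ Finset.Icc (1 : ℤ) (N : ℤ), f (i + 1) =
      ∑ i ∈ Finset.Icc (1 : ℤ) (N : ℤ), f i + f ((N : ℤ) + 1) - f 1 := by
  have h1 : ∑ i ∈ Finset.Icc (1 : ℤ) (N : ℤ), f (i + 1) =
      ∑ i ∈ Finset.Icc (2 : ℤ) ((N : ℤ) + 1), f i := by
    rw [show (2 : ℤ) = 1 + 1 by ring, ← Finset.map_add_right_Icc, Finset.sum_map]
    rfl
  have hN' : (1 : ℤ) ≤ (N : ℤ) := by exact_mod_cast hN
  have h2 : insert (1 : ℤ) (Finset.Icc 2 ((N : ℤ) + 1)) = Finset.Icc 1 ((N : ℤ) + 1) := by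
    ext i; simp only [Finset.mem_insert, Finset.mem_Icc]; omega
  have h3 : insert ((N : ℤ) + 1) (Finset.Icc 1 (N : ℤ)) = Finset.Icc 1 ((N : ℤ) + 1) := by
    ext i; simp only [Finset.mem_insert, Finset.mem_Icc]; omega
  have m2 : (1 : ℤ) ∉ Finset.Icc 2 ((N : ℤ) + 1) := by simp
  have m3 : ((N : ℤ) + 1) ∉ Finset.Icc 1 (N : ℤ) := by simp
  have e2 := Finset.sum_insert (f := f) m2
  have e3 := Finset.sum_insert (f := f) m3
  rw [h2] at e2; rw [h3] at e3
  rw [h1]; linarith [e2, e3]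

/-- Shift invariance of sums over a period. -/
lemma shift_sum (N : ℕ) (hN : 1 ≤ N) (g : ℤ → ℝ) (hg : ∀ i, g (i + (N : ℤ)) = g i) :
    ∀ c : ℕ, ∑ i ∈ Finset.Icc (1 : ℤ) (N : ℤ), g (i + (c : ℤ)) =
      ∑ i ∈ Finset.Icc (1 : ℤ) (N : ℤ), g i := by
  intro c
  induction c with
  | zero => simp
  | succ n ih =>
    have step := shift_reindex N hN (fun i => g (i + (n : ℤ)))
    have hper : g ((N : ℤ) + 1 + (n : ℤ)) = g (1 + (n : ℤ)) := by
      have := hg (1 + (n : ℤ))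
      rw [show (1 : ℤ) + (n : ℤ) + (N : ℤ) = (N : ℤ) + 1 + (n : ℤ) by ring] at this
      exact this
    simp only [hper] at step
    calc ∑ i ∈ Finset.Icc (1 : ℤ) (N : ℤ), g (i + ((n + 1 : ℕ) : ℤ))
        = ∑ i ∈ Finset.Icc (1 : ℤ) (N : ℤ), g ((i + 1) + (n : ℤ)) := by
          refine Finset.sum_congr rfl fun i _ => ?_
          congr 1; push_cast; ring
      _ = ∑ i ∈ Finset.Icc (1 : ℤ) (N : ℤ), g (i + (n : ℤ)) := by rw [step]; ring
      _ = _ := ih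

/-- `Ẽ^k(Z) = (1/(s N^{s+1})) Σ_{i=1}^N (z_{i+k} - z_i)^{-s}`. -/
noncomputable def EtildeK (s : ℝ) (N : ℕ) (z : ℤ → ℝ) (k : ℕ) : ℝ :=
  (1 / (s * (N : ℝ) ^ (s + 1))) *
    ∑ i ∈ Finset.Icc (1 : ℤ) (N : ℤ), (z (i + (k : ℤ)) - z i) ^ (-s)

theorem stmt15 (s : ℝ) (hs : 0 < s) (N : ℕ) (hN : 2 ≤ N) (z : ℤ → ℝ)
    (hper : ∀ i : ℤ, z (i + (N : ℤ)) = z i + 1)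
    (hsort : ∀ i : ℤ, z i < z (i + 1))
    (k : ℕ) (hk1 : 1 ≤ k) (hk2 : k ≤ N - 1) :
    s⁻¹ * (k : ℝ) ^ (-s) ≤ EtildeK s N z k ∧
      EtildeK s N z k ≤ (k : ℝ) ^ (-s) * EtildeK s N z 1 := by
  have hN1 : 1 ≤ N := by omega
  set I := Finset.Icc (1 : ℤ) (N : ℤ) with hI
  -- gaps
  set d : ℤ → ℝ := fun m => z (m + 1) - z m with hd
  have hdpos : ∀ m, 0 < d m := fun m => sub_pos.2 (hsort m)
  have hdper : ∀ m, d (m + (N : ℤ)) = d m := by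
    intro m
    show z (m + (N : ℤ) + 1) - z (m + (N : ℤ)) = z (m + 1) - z m
    rw [show m + (N : ℤ) + 1 = (m + 1) + (N : ℤ) by ring, hper, hper]; ring
  -- telescoping per point
  have tele : ∀ (i : ℤ) (m : ℕ), z (i + (m : ℤ)) - z i = ∑ j ∈ Finset.range m, d (i + (j : ℤ)) := by
    intro i m
    induction m with
    | zero => simp
    | succ n ih =>
      rw [Finset.sum_range_succ, ← ih,
        show i + ((n + 1 : ℕ) : ℤ) = (i + (n : ℤ)) + 1 by push_cast; ring]
      show z (i + (n : ℤ) + 1) - z i = z (i + (n : ℤ)) - z i + (z (i + (n : ℤ) + 1) - z (i + (n : ℤ)))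
      ring
  have gap_pos : ∀ (i : ℤ) (m : ℕ), 1 ≤ m → 0 < z (i + (m : ℤ)) - z i := by
    intro i m hm
    rw [tele]
    exact Finset.sum_pos (fun j _ => hdpos _) (Finset.nonempty_range_iff.2 (by omega))
  have hcard : I.card = N := by
    rw [hI, Int.card_Icc, show ((N : ℤ) + 1 - 1) = (N : ℤ) by ring, Int.toNat_natCast]
  -- sum of d over a period is 1
  have hsum_d : ∑ i ∈ I, d i = 1 := by
    have := shift_reindex N hN1 z
    have hz : z ((N : ℤ) + 1) = z 1 + 1 := by
      have := hper 1; rwa [show (1 : ℤ) + (N : ℤ) = (N : ℤ) + 1 by ring] at this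
    have : ∑ i ∈ I, (z (i + 1) - z i) = 1 := by
      rw [Finset.sum_sub_distrib, shift_reindex N hN1 z, hz]; ring
    simpa [hd] using this
  -- sum of gaps of order m is m
  have hsum_gaps : ∀ m : ℕ, ∑ i ∈ I, (z (i + (m : ℤ)) - z i) = (m : ℝ) := by
    intro m
    calc ∑ i ∈ I, (z (i + (m : ℤ)) - z i) = ∑ i ∈ I, ∑ j ∈ Finset.range m, d (i + (j : ℤ)) :=
          Finset.sum_congr rfl fun i _ => tele i m
      _ = ∑ j ∈ Finset.range m, ∑ i ∈ I, d (i + (j : ℤ)) := Finset.sum_comm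
      _ = ∑ j ∈ Finset.range m, ∑ i ∈ I, d i :=
          Finset.sum_congr rfl fun j _ => shift_sum N hN1 d hdper j
      _ = (m : ℝ) := by rw [hsum_d]; simp
  -- energies as sums
  set S : ℕ → ℝ := fun m => ∑ i ∈ I, (z (i + (m : ℤ)) - z i) ^ (-s) with hS
  have hE : ∀ m, EtildeK s N z m = (1 / (s * (N : ℝ) ^ (s + 1))) * S m := fun m => rfl
  have hkpos : (0 : ℝ) < (k : ℝ) := by exact_mod_cast hk1
  have hNpos : (0 : ℝ) < (N : ℝ) := by positivity
  have hPpos : (0 : ℝ) < (N : ℝ) ^ (s + 1) := Real.rpow_pos_of_pos hNpos _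
  have hKpos : (0 : ℝ) < (k : ℝ) ^ s := Real.rpow_pos_of_pos hkpos _
  have hkneg : (k : ℝ) ^ (-s) = ((k : ℝ) ^ s)⁻¹ := Real.rpow_neg hkpos.le s
  constructor
  · -- lower bound
    have hH := holder_key I hs (fun i => z (i + (k : ℤ)) - z i) (fun i _ => gap_pos i k hk1)
    rw [hcard, hsum_gaps k] at hH
    -- hH : (N:ℝ)^(s+1) ≤ (k:ℝ)^s * S k
    rw [hE, hkneg]
    rw [show s⁻¹ * ((k : ℝ) ^ s)⁻¹ = 1 / (s * (k : ℝ) ^ s) by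
      rw [one_div, mul_inv]]
    rw [show (1 / (s * (N : ℝ) ^ (s + 1))) * S k = S k / (s * (N : ℝ) ^ (s + 1)) by ring]
    rw [div_le_div_iff₀ (by positivity) (by positivity)]
    have hSk : 0 ≤ S k := Finset.sum_nonneg fun i _ => Real.rpow_nonneg (gap_pos i k hk1).le _
    nlinarith [mul_le_mul_of_nonneg_left hH hs.le]
  · -- upper bound
    have key : S k ≤ (k : ℝ) ^ (-s) * S 1 := by
      have hterm : ∀ i ∈ I, (z (i + (k : ℤ)) - z i) ^ (-s) ≤
          (∑ j ∈ Finset.range k, d (i + (j : ℤ)) ^ (-s)) / (k : ℝ) ^ (s + 1) := by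
        intro i _
        have hH := holder_key (Finset.range k) hs (fun j => d (i + (j : ℤ)))
          (fun j _ => hdpos _)
        rw [Finset.card_range, ← tele i k] at hH
        have hA := gap_pos i k hk1
        have hApow : (0 : ℝ) < (z (i + (k : ℤ)) - z i) ^ s := Real.rpow_pos_of_pos hA _
        rw [Real.rpow_neg hA.le, show ((z (i + (k : ℤ)) - z i) ^ s)⁻¹ =
          1 / (z (i + (k : ℤ)) - z i) ^ s by rw [one_div]]
        rw [div_le_div_iff₀ hApow (Real.rpow_pos_of_pos hkpos _)]
        nlinarith [hH]
      have hsumB : ∑ i ∈ I, ∑ j ∈ Finset.range k, d (i + (j : ℤ)) ^ (-s) = (k : ℝ) * S 1 := by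
        have hper' : ∀ m, (fun m => d m ^ (-s)) (m + (N : ℤ)) = (fun m => d m ^ (-s)) m := by
          intro m; simp only [hdper]
        calc ∑ i ∈ I, ∑ j ∈ Finset.range k, d (i + (j : ℤ)) ^ (-s)
            = ∑ j ∈ Finset.range k, ∑ i ∈ I, d (i + (j : ℤ)) ^ (-s) := Finset.sum_comm
          _ = ∑ j ∈ Finset.range k, ∑ i ∈ I, d i ^ (-s) :=
              Finset.sum_congr rfl fun j _ => shift_sum N hN1 (fun m => d m ^ (-s)) hper' j
          _ = (k : ℝ) * S 1 := by
              rw [Finset.sum_const, Finset.card_range, nsmul_eq_mul]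
              congr 1
      calc S k ≤ ∑ i ∈ I, (∑ j ∈ Finset.range k, d (i + (j : ℤ)) ^ (-s)) / (k : ℝ) ^ (s + 1) :=
            Finset.sum_le_sum hterm
        _ = (∑ i ∈ I, ∑ j ∈ Finset.range k, d (i + (j : ℤ)) ^ (-s)) / (k : ℝ) ^ (s + 1) := by
            rw [Finset.sum_div]
        _ = (k : ℝ) * S 1 / (k : ℝ) ^ (s + 1) := by rw [hsumB]
        _ = (k : ℝ) ^ (-s) * S 1 := by
            rw [Real.rpow_add hkpos, Real.rpow_one, hkneg]
            field_simp
    rw [hE, hE]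
    have h0 : (0 : ℝ) ≤ 1 / (s * (N : ℝ) ^ (s + 1)) := by positivity
    calc (1 / (s * (N : ℝ) ^ (s + 1))) * S k
        ≤ (1 / (s * (N : ℝ) ^ (s + 1))) * ((k : ℝ) ^ (-s) * S 1) :=
          mul_le_mul_of_nonneg_left key h0
      _ = (k : ℝ) ^ (-s) * ((1 / (s * (N : ℝ) ^ (s + 1))) * S 1) := by ring
end
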